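/- arXiv:1303.1998 — 5 statements merged into one kernel-verified Lean document; each statement's English description precedes it below -/
import Mathlib

section
/- Let q be a prime power and ℓ ∈ F_q[t] a monic irreducible polynomial. Then the average of the ℓ-adic valuation over nonzero polynomials exists and equals A(v_ℓ(P), {P ∈ F_q[t], P ≠ 0}) = 1/(Norm(ℓ) − 1); that is, lim_{N→∞} (Σ_{P ≠ 0, deg P ≤ N} v_ℓ(P)) / #{P ≠ 0 : deg P ≤ N} = 1/(q^{deg ℓ} − 1). -/
open Polynomial Filter
attribute [local instance] Classical.propDecidable

private def SS (Fq : Type*) [Field Fq] (N : ℕ) : Set (Polynomial Fq) :=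
  {P : Polynomial Fq | P ≠ 0 ∧ P.degree ≤ (N : WithBot ℕ)}

private lemma mem_SS_iff {Fq : Type*} [Field Fq] {N : ℕ} {P : Polynomial Fq} :
    P ∈ SS Fq N ↔ P ≠ 0 ∧ P.natDegree ≤ N := by
  simp only [SS, Set.mem_setOf_eq, and_congr_right_iff]
  intro h0
  rw [← natDegree_le_iff_degree_le]

private lemma SS_eq (Fq : Type*) [Field Fq] (N : ℕ) :
    SS Fq N = (degreeLT Fq (N + 1) : Set (Polynomial Fq)) \ {0} := by
  ext P
  simp only [SS, Set.mem_setOf_eq, Set.mem_diff, SetLike.mem_coe, mem_degreeLT,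
    Set.mem_singleton_iff]
  constructor
  · rintro ⟨h0, hd⟩
    refine ⟨?_, h0⟩
    rw [← natDegree_lt_iff_degree_lt h0, Nat.lt_succ_iff, natDegree_le_iff_degree_le]
    exact hd
  · rintro ⟨hd, h0⟩
    refine ⟨h0, ?_⟩
    rw [← natDegree_le_iff_degree_le, ← Nat.lt_succ_iff, natDegree_lt_iff_degree_lt h0]
    exact hd

private lemma SS_finite (Fq : Type*) [Field Fq] [Fintype Fq] (N : ℕ) : (SS Fq N).Finite := by
  rw [SS_eq]
  haveI : Finite (degreeLT Fq (N + 1)) :=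
    Finite.of_equiv _ (degreeLTEquiv Fq (N + 1)).toEquiv.symm
  exact ((degreeLT Fq (N + 1) : Set (Polynomial Fq)).toFinite).diff

private lemma SS_ncard (Fq : Type*) [Field Fq] [Fintype Fq] (N : ℕ) :
    (SS Fq N).ncard = Fintype.card Fq ^ (N + 1) - 1 := by
  haveI : Finite (degreeLT Fq (N + 1)) :=
    Finite.of_equiv _ (degreeLTEquiv Fq (N + 1)).toEquiv.symm
  have hc : (degreeLT Fq (N + 1) : Set (Polynomial Fq)).ncard = Fintype.card Fq ^ (N + 1) := by
    rw [← Nat.card_coe_set_eq]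
    have : Nat.card (degreeLT Fq (N + 1)) = Fintype.card Fq ^ (N + 1) := by
      rw [Nat.card_congr (degreeLTEquiv Fq (N + 1)).toEquiv]
      simp [Nat.card_eq_fintype_card]
    exact this
  rw [SS_eq, ← hc]
  have h0 : (0 : Polynomial Fq) ∈ (degreeLT Fq (N + 1) : Set (Polynomial Fq)) :=
    (degreeLT Fq (N + 1)).zero_mem
  rw [Set.ncard_diff_singleton_of_mem h0]


private lemma dvd_set_eq_image {Fq : Type*} [Field Fq] {ℓ : Polynomial Fq} (hℓ0 : ℓ ≠ 0)
    {k N : ℕ} (hkd : k * ℓ.natDegree ≤ N) :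
    {P | P ∈ SS Fq N ∧ ℓ ^ k ∣ P} = (fun Q => ℓ ^ k * Q) '' SS Fq (N - k * ℓ.natDegree) := by
  have hpow : ℓ ^ k ≠ 0 := pow_ne_zero _ hℓ0
  ext P
  simp only [Set.mem_setOf_eq, Set.mem_image, mem_SS_iff]
  constructor
  · rintro ⟨⟨h0, hdeg⟩, Q, rfl⟩
    have hQ0 : Q ≠ 0 := fun h => h0 (by simp [h])
    refine ⟨Q, ⟨hQ0, ?_⟩, rfl⟩
    rw [natDegree_mul hpow hQ0, natDegree_pow] at hdeg
    omega
  · rintro ⟨Q, ⟨hQ0, hdeg⟩, rfl⟩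
    refine ⟨⟨mul_ne_zero hpow hQ0, ?_⟩, Q, rfl⟩
    rw [natDegree_mul hpow hQ0, natDegree_pow]
    omega

private lemma dvd_set_ncard {Fq : Type*} [Field Fq] [Fintype Fq] {ℓ : Polynomial Fq}
    (hℓ0 : ℓ ≠ 0) {k N : ℕ} (hkd : k * ℓ.natDegree ≤ N) :
    {P | P ∈ SS Fq N ∧ ℓ ^ k ∣ P}.ncard
      = Fintype.card Fq ^ (N - k * ℓ.natDegree + 1) - 1 := by
  rw [dvd_set_eq_image hℓ0 hkd,
    Set.ncard_image_of_injective _ (mul_right_injective₀ (pow_ne_zero k hℓ0)),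
    SS_ncard]

private lemma dvd_set_empty {Fq : Type*} [Field Fq] {ℓ : Polynomial Fq}
    {k N : ℕ} (hkd : N < k * ℓ.natDegree) :
    {P | P ∈ SS Fq N ∧ ℓ ^ k ∣ P} = (∅ : Set (Polynomial Fq)) := by
  ext P
  simp only [Set.mem_setOf_eq, Set.mem_empty_iff_false, iff_false, not_and, mem_SS_iff]
  rintro ⟨h0, hdeg⟩ hdvd
  have := natDegree_le_of_dvd hdvd h0
  rw [natDegree_pow] at this
  omega


private lemma sum_multiplicity {Fq : Type*} [Field Fq] [Fintype Fq] {ℓ : Polynomial Fq}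
    (hprime : Prime ℓ) (hd : 0 < ℓ.natDegree) (N : ℕ) :
    ∑ P ∈ (SS_finite Fq N).toFinset, multiplicity ℓ P
      = ∑ k ∈ Finset.Icc 1 (N / ℓ.natDegree),
          (Fintype.card Fq ^ (N - k * ℓ.natDegree + 1) - 1) := by
  have hℓ0 : ℓ ≠ 0 := hprime.ne_zero
  have step1 : ∀ P ∈ (SS_finite Fq N).toFinset,
      multiplicity ℓ P = ∑ k ∈ Finset.Icc 1 N, if ℓ ^ k ∣ P then 1 else 0 := by
    intro P hP
    rw [Set.Finite.mem_toFinset, mem_SS_iff] at hP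
    have hfin : FiniteMultiplicity ℓ P := FiniteMultiplicity.of_prime_left hprime hP.1
    have hmle : multiplicity ℓ P ≤ N := by
      have h1 : ℓ ^ multiplicity ℓ P ∣ P := pow_dvd_of_le_multiplicity le_rfl
      have h2 := natDegree_le_of_dvd h1 hP.1
      rw [natDegree_pow] at h2
      calc multiplicity ℓ P ≤ multiplicity ℓ P * ℓ.natDegree :=
            Nat.le_mul_of_pos_right _ hd
        _ ≤ P.natDegree := h2
        _ ≤ N := hP.2
    simp_rw [hfin.pow_dvd_iff_le_multiplicity]
    rw [← Finset.card_filter]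
    have : (Finset.Icc 1 N).filter (· ≤ multiplicity ℓ P)
        = Finset.Icc 1 (multiplicity ℓ P) := by
      ext k
      simp only [Finset.mem_filter, Finset.mem_Icc]
      omega
    rw [this, Nat.card_Icc]
    omega
  rw [Finset.sum_congr rfl step1, Finset.sum_comm]
  have inner : ∀ k : ℕ, (∑ P ∈ (SS_finite Fq N).toFinset, if ℓ ^ k ∣ P then 1 else 0)
      = {P | P ∈ SS Fq N ∧ ℓ ^ k ∣ P}.ncard := by
    intro k
    rw [← Finset.card_filter, ← Set.ncard_coe_finset]
    congr 1
    ext P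
    simp [Set.Finite.mem_toFinset]
  rw [Finset.sum_congr rfl fun k _ => inner k]
  have hsub : Finset.Icc 1 (N / ℓ.natDegree) ⊆ Finset.Icc 1 N :=
    Finset.Icc_subset_Icc_right (Nat.div_le_self _ _)
  rw [← Finset.sum_subset hsub ?h]
  · exact Finset.sum_congr rfl fun k hk => by
      rw [Finset.mem_Icc] at hk
      exact dvd_set_ncard hℓ0 ((Nat.le_div_iff_mul_le hd).mp hk.2)
  case h =>
    intro k hk hk'
    rw [Finset.mem_Icc] at hk hk'
    have : N < k * ℓ.natDegree := by
      rcases Nat.lt_or_ge N (k * ℓ.natDegree) with h | h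
      · exact h
      · exact absurd ⟨hk.1, (Nat.le_div_iff_mul_le hd).mpr h⟩ hk'
    rw [dvd_set_empty this, Set.ncard_empty]


private lemma geom_closed {Q : ℝ} {d : ℕ} (hQd : Q ^ d - 1 ≠ 0) :
    ∀ M N : ℕ, M * d ≤ N →
      ∑ k ∈ Finset.Icc 1 M, Q ^ (N - k * d + 1)
        = (Q ^ (N + 1) - Q ^ (N - M * d + 1)) / (Q ^ d - 1) := by
  intro M
  induction M with
  | zero => intro N _; simp
  | succ M ih =>
      intro N h
      have hx : (M + 1) * d = M * d + d := by ring
      rw [Finset.sum_Icc_succ_top (by omega), ih N (by omega)]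
      have h1 : N - M * d + 1 = (N - (M + 1) * d + 1) + d := by omega
      rw [h1, pow_add]
      field_simp
      ring

private lemma tendsto_ratio {q : ℕ} (hq : 2 ≤ q) {d : ℕ} (hd : 0 < d) :
    Filter.Tendsto (fun N : ℕ =>
      (∑ k ∈ Finset.Icc 1 (N / d), ((q : ℝ) ^ (N - k * d + 1) - 1)) /
        ((q : ℝ) ^ (N + 1) - 1))
      Filter.atTop (nhds (1 / ((q : ℝ) ^ d - 1))) := by
  have hQ1 : (1 : ℝ) < q := by exact_mod_cast hq
  have hQ0 : (0 : ℝ) < q := by linarith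
  have hQ2 : (2 : ℝ) ≤ q := by exact_mod_cast hq
  have hQd1 : (1 : ℝ) < (q : ℝ) ^ d := one_lt_pow₀ hQ1 hd.ne'
  have hQdne : (q : ℝ) ^ d - 1 ≠ 0 := by linarith
  have he_ge : ∀ N : ℕ, (q : ℝ) ^ N ≤ (q : ℝ) ^ (N + 1) - 1 := by
    intro N
    have h1 : (1 : ℝ) ≤ (q : ℝ) ^ N := one_le_pow₀ (le_of_lt hQ1)
    have h2 : (q : ℝ) ^ (N + 1) = (q : ℝ) ^ N * q := by ring
    have h3 : (1 : ℝ) * 1 ≤ (q : ℝ) ^ N * ((q : ℝ) - 1) :=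
      mul_le_mul h1 (by linarith) (by linarith) (by positivity)
    have h4 : (q : ℝ) ^ (N + 1) - 1 - (q : ℝ) ^ N = (q : ℝ) ^ N * ((q : ℝ) - 1) - 1 := by
      rw [h2]; ring
    linarith
  have he_pos : ∀ N : ℕ, (0 : ℝ) < (q : ℝ) ^ (N + 1) - 1 := by
    intro N
    have h1 : (0 : ℝ) < (q : ℝ) ^ N := by positivity
    linarith [he_ge N]
  have tendsto_e : Tendsto (fun N : ℕ => (q : ℝ) ^ (N + 1) - 1) atTop atTop := by
    have h1 : Tendsto (fun N : ℕ => (q : ℝ) ^ N) atTop atTop :=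
      tendsto_pow_atTop_atTop_of_one_lt hQ1
    have h2 : Tendsto (fun N : ℕ => (q : ℝ) ^ (N + 1)) atTop atTop :=
      h1.comp (tendsto_add_atTop_nat 1)
    simpa [sub_eq_add_neg] using tendsto_atTop_add_const_right atTop (-1 : ℝ) h2
  have hb : Tendsto
      (fun N : ℕ => ((q : ℝ) ^ (N % d + 1) - 1) / ((q : ℝ) ^ (N + 1) - 1))
      atTop (nhds 0) := by
    apply squeeze_zero (g := fun N : ℕ => ((q : ℝ) ^ d) / ((q : ℝ) ^ (N + 1) - 1))
    · intro N
      apply div_nonneg _ (le_of_lt (he_pos N))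
      have : (1 : ℝ) ≤ (q : ℝ) ^ (N % d + 1) := one_le_pow₀ (le_of_lt hQ1)
      linarith
    · intro N
      have hnum : (q : ℝ) ^ (N % d + 1) - 1 ≤ (q : ℝ) ^ d := by
        have h1 : N % d + 1 ≤ d := by
          have := Nat.mod_lt N hd
          omega
        have := pow_le_pow_right₀ (le_of_lt hQ1) h1
        linarith
      exact div_le_div₀ (by positivity) hnum (he_pos N) le_rfl
    · exact Tendsto.div_atTop tendsto_const_nhds tendsto_e
  have hc : Tendsto
      (fun N : ℕ => ((N / d : ℕ) : ℝ) / ((q : ℝ) ^ (N + 1) - 1)) atTop (nhds 0) := by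
    apply squeeze_zero (g := fun N : ℕ => (N : ℝ) * (1 / q) ^ N)
    · intro N
      exact div_nonneg (Nat.cast_nonneg _) (le_of_lt (he_pos N))
    · intro N
      have h1 : ((N / d : ℕ) : ℝ) ≤ (N : ℝ) := by
        exact_mod_cast Nat.div_le_self N d
      have h2 : (0 : ℝ) < (q : ℝ) ^ N := by positivity
      calc ((N / d : ℕ) : ℝ) / ((q : ℝ) ^ (N + 1) - 1)
          ≤ (N : ℝ) / (q : ℝ) ^ N :=
            div_le_div₀ (Nat.cast_nonneg _) h1 h2 (he_ge N)
        _ = (N : ℝ) * (1 / q) ^ N := by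
            rw [div_pow, one_pow, mul_one_div]
    · exact tendsto_self_mul_const_pow_of_lt_one (by positivity)
        ((div_lt_one hQ0).mpr hQ1)
  have key : Tendsto
      (fun N : ℕ => (1 / ((q : ℝ) ^ d - 1)) *
          (1 - ((q : ℝ) ^ (N % d + 1) - 1) / ((q : ℝ) ^ (N + 1) - 1))
        - ((N / d : ℕ) : ℝ) / ((q : ℝ) ^ (N + 1) - 1))
      atTop (nhds (1 / ((q : ℝ) ^ d - 1))) := by
    have := (((tendsto_const_nhds (x := (1:ℝ))).sub hb).const_mul (1 / ((q : ℝ) ^ d - 1))).sub hc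
    simpa using this
  apply key.congr
  intro N
  have hM : (N / d) * d ≤ N := Nat.div_mul_le_self N d
  have hmod : N - N / d * d = N % d := by
    have h := Nat.mod_add_div' N d
    omega
  rw [Finset.sum_sub_distrib, geom_closed hQdne (N / d) N hM, hmod,
    Finset.sum_const, Nat.card_Icc]
  have hne : (q : ℝ) ^ (N + 1) - 1 ≠ 0 := (he_pos N).ne'
  simp only [smul_eq_mul, mul_one, Nat.add_sub_cancel]
  field_simp
  ring

/-- For `ℓ` monic irreducible in `F_q[t]`, the average of the `ℓ`-adic
valuation over nonzero polynomials of degree at most `N` tends, as `N → ∞`, to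
`1/(q^{deg ℓ} - 1)`. -/
theorem average_valuation_nonzero_polynomials
    (Fq : Type*) [Field Fq] [Fintype Fq]
    (ℓ : Polynomial Fq) (hmonic : ℓ.Monic) (hirr : Irreducible ℓ) :
    Filter.Tendsto
      (fun N : ℕ =>
        (∑ᶠ P ∈ {P : Polynomial Fq | P ≠ 0 ∧ P.degree ≤ (N : WithBot ℕ)},
            (multiplicity ℓ P : ℝ)) /
          (({P : Polynomial Fq | P ≠ 0 ∧ P.degree ≤ (N : WithBot ℕ)}).ncard : ℝ))
      Filter.atTop
      (nhds (1 / ((Fintype.card Fq : ℝ) ^ ℓ.natDegree - 1))) := by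
  have hq : 2 ≤ Fintype.card Fq := Fintype.one_lt_card
  have hd : 0 < ℓ.natDegree := hirr.natDegree_pos
  have hprime : Prime ℓ := hirr.prime
  have hSS : ∀ N : ℕ, {P : Polynomial Fq | P ≠ 0 ∧ P.degree ≤ (N : WithBot ℕ)} = SS Fq N :=
    fun _ => rfl
  simp only [hSS]
  apply (tendsto_ratio hq hd).congr
  intro N
  have hnum : (∑ᶠ P ∈ SS Fq N, (multiplicity ℓ P : ℝ))
      = ∑ k ∈ Finset.Icc 1 (N / ℓ.natDegree),
          ((Fintype.card Fq : ℝ) ^ (N - k * ℓ.natDegree + 1) - 1) := by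
    rw [← Set.Finite.coe_toFinset (SS_finite Fq N), finsum_mem_coe_finset, ← Nat.cast_sum,
      sum_multiplicity hprime hd N, Nat.cast_sum]
    refine Finset.sum_congr rfl fun k _ => ?_
    have h1 : 1 ≤ Fintype.card Fq ^ (N - k * ℓ.natDegree + 1) :=
      Nat.one_le_pow _ _ (by omega)
    rw [Nat.cast_sub h1, Nat.cast_pow, Nat.cast_one]
  have hden : ((SS Fq N).ncard : ℝ) = (Fintype.card Fq : ℝ) ^ (N + 1) - 1 := by
    rw [SS_ncard]
    have h1 : 1 ≤ Fintype.card Fq ^ (N + 1) := Nat.one_le_pow _ _ (by omega)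
    rw [Nat.cast_sub h1, Nat.cast_pow, Nat.cast_one]
  rw [hnum, hden]
end

section
/- Let q be a prime power, ℓ ∈ F_q[t] monic irreducible, k ≥ 1 an integer, and r ∈ F_q[t] with deg r < k·deg ℓ. For pairs (a,b) ∈ F_q[t]² with ℓ ∤ gcd(a,b), write (a:b) ≡ r (mod ℓ^k) to mean: a ≡ br (mod ℓ^k) and ℓ ∤ b, in case ℓ ∤ r; or b ≡ ar (mod ℓ^k) and ℓ | b, in case ℓ | r. Then the density of such pairs among ℓ-coprime pairs exists and equals Norm(ℓ)^{−k} · Norm(ℓ)/(Norm(ℓ)+1); that is, lim_{N→∞} #{(a,b) : deg a, deg b ≤ N, ℓ ∤ gcd(a,b), (a:b) ≡ r mod ℓ^k} / #{(a,b) : deg a, deg b ≤ N, ℓ ∤ gcd(a,b)} = q^{−k·deg ℓ} · q^{deg ℓ}/(q^{deg ℓ}+1). -/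
open Polynomial Filter

section DensityAux

set_option linter.unusedSectionVars false

variable {Fq : Type*} [Field Fq] [Fintype Fq]

private lemma deg_lt_succ_iff' {p : Fq[X]} {N : ℕ} :
    p.degree < ((N + 1 : ℕ) : WithBot ℕ) ↔ p.degree ≤ (N : WithBot ℕ) := by
  cases hd : p.degree with
  | bot => exact iff_of_true (WithBot.bot_lt_coe _) bot_le
  | coe m =>
      rw [Nat.cast_withBot, Nat.cast_withBot, WithBot.coe_lt_coe, WithBot.coe_le_coe]
      exact Nat.lt_succ_iff

private noncomputable def degLTEquiv' (n : ℕ) :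
    {p : Fq[X] // p.degree < (n : WithBot ℕ)} ≃ (Fin n → Fq) :=
  (Equiv.subtypeEquivRight (fun _ => (mem_degreeLT).symm)).trans (degreeLTEquiv Fq n).toEquiv

private lemma card_degLT' (n : ℕ) :
    Nat.card {p : Fq[X] // p.degree < (n : WithBot ℕ)} = Fintype.card Fq ^ n := by
  rw [Nat.card_congr (degLTEquiv' n), Nat.card_eq_fintype_card, Fintype.card_fun]
  simp

private lemma finite_degLT' (n : ℕ) : {p : Fq[X] | p.degree < (n : WithBot ℕ)}.Finite := by
  rw [← Set.finite_coe_iff]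
  exact Finite.of_equiv (Fin n → Fq) (degLTEquiv' n).symm

private lemma key_lt' {n : ℕ} {g : Fq[X]} (hg : g.Monic) (hn : g.natDegree ≤ n) {x : WithBot ℕ}
    (hx : x < ((n - g.natDegree : ℕ) : WithBot ℕ)) : g.degree + x < (n : WithBot ℕ) := by
  rw [degree_eq_natDegree hg.ne_zero]
  calc (g.natDegree : WithBot ℕ) + x
      < (g.natDegree : WithBot ℕ) + ((n - g.natDegree : ℕ) : WithBot ℕ) :=
        WithBot.add_lt_add_left (by exact WithBot.coe_ne_bot) hx
    _ = (n : WithBot ℕ) := by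
        rw [Nat.cast_withBot, Nat.cast_withBot, Nat.cast_withBot, ← WithBot.coe_add,
          Nat.add_sub_cancel' hn]

private lemma dvd_mod_sub' {g : Fq[X]} (hg : g.Monic) (p : Fq[X]) : g ∣ p - p %ₘ g := by
  rw [modByMonic_eq_sub_mul_div _ g]
  simp [mul_comm]

private lemma card_pairset' (n : ℕ) (g : Fq[X]) (hg : g.Monic) (hn : g.natDegree ≤ n)
    (P : Fq[X] → Prop) (s : Fq[X]) :
    Nat.card {ab : Fq[X] × Fq[X] //
        (ab.2.degree < (n : WithBot ℕ) ∧ P ab.2) ∧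
        ab.1.degree < (n : WithBot ℕ) ∧ g ∣ ab.1 - ab.2 * s}
      = Nat.card {b : Fq[X] // b.degree < (n : WithBot ℕ) ∧ P b}
        * Fintype.card Fq ^ (n - g.natDegree) := by
  have hg0 : g ≠ 0 := hg.ne_zero
  have hdegn : (g.natDegree : WithBot ℕ) ≤ (n : WithBot ℕ) := by
    rw [Nat.cast_withBot, Nat.cast_withBot, WithBot.coe_le_coe]; exact hn
  set Φ : {b : Fq[X] // b.degree < (n : WithBot ℕ) ∧ P b}
      × {m : Fq[X] // m.degree < ((n - g.natDegree : ℕ) : WithBot ℕ)}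
      → {ab : Fq[X] × Fq[X] //
        (ab.2.degree < (n : WithBot ℕ) ∧ P ab.2) ∧
        ab.1.degree < (n : WithBot ℕ) ∧ g ∣ ab.1 - ab.2 * s} :=
    fun x => ⟨((x.1.1 * s) %ₘ g + g * x.2.1, x.1.1), x.1.2, by
        refine lt_of_le_of_lt (degree_add_le _ _) (max_lt ?_ ?_)
        · exact lt_of_lt_of_le (degree_modByMonic_lt _ hg)
            ((degree_eq_natDegree hg0).le.trans hdegn)
        · exact lt_of_le_of_lt (degree_mul_le _ _) (key_lt' hg hn x.2.2), by
        have h1 : g ∣ x.1.1 * s - (x.1.1 * s) %ₘ g := dvd_mod_sub' hg _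
        have h2 : (x.1.1 * s) %ₘ g + g * x.2.1 - x.1.1 * s
            = g * x.2.1 - (x.1.1 * s - (x.1.1 * s) %ₘ g) := by ring
        rw [h2]
        exact dvd_sub (Dvd.intro _ rfl) h1⟩ with hΦ
  have hbij : Function.Bijective Φ := by
    constructor
    · rintro ⟨⟨b, hb⟩, ⟨m, hm⟩⟩ ⟨⟨b', hb'⟩, ⟨m', hm'⟩⟩ h
      simp only [hΦ, Subtype.mk.injEq, Prod.mk.injEq] at h
      obtain ⟨h1, h2⟩ := h
      subst h2
      have hmm : m = m' := mul_left_cancel₀ hg0 (add_left_cancel h1)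
      subst hmm; rfl
    · rintro ⟨⟨a, b⟩, ⟨hbdeg, hPb⟩, hadeg, hdvd⟩
      have h1 : g ∣ b * s - (b * s) %ₘ g := dvd_mod_sub' hg _
      have h2 : g ∣ a - (b * s) %ₘ g := by
        have h3 := dvd_add hdvd h1
        rwa [sub_add_sub_cancel] at h3
      obtain ⟨m, hm⟩ := h2
      have hmdeg : m.degree < ((n - g.natDegree : ℕ) : WithBot ℕ) := by
        by_cases hm0 : m = 0
        · subst hm0; simp only [degree_zero]
          exact WithBot.bot_lt_coe _
        · have hgm : (g * m).degree < (n : WithBot ℕ) := by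
            rw [← hm]
            refine lt_of_le_of_lt (degree_sub_le _ _) (max_lt hadeg ?_)
            exact lt_of_lt_of_le (degree_modByMonic_lt _ hg)
              ((degree_eq_natDegree hg0).le.trans hdegn)
          rw [degree_mul, degree_eq_natDegree hg0, degree_eq_natDegree hm0] at hgm
          rw [degree_eq_natDegree hm0]
          rw [Nat.cast_withBot, Nat.cast_withBot, ← WithBot.coe_add, Nat.cast_withBot,
            WithBot.coe_lt_coe] at hgm
          rw [Nat.cast_withBot, Nat.cast_withBot, WithBot.coe_lt_coe]
          omega
      refine ⟨⟨⟨b, hbdeg, hPb⟩, ⟨m, hmdeg⟩⟩, ?_⟩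
      refine Subtype.ext (Prod.ext ?_ rfl)
      show (b * s) %ₘ g + g * m = a
      rw [← hm]; ring
  rw [Nat.card_congr (Equiv.ofBijective Φ hbij).symm, Nat.card_prod, card_degLT']

private lemma card_cond_swap' {α : Type*} (Q : α × α → Prop) :
    Nat.card {x : α × α // Q (x.2, x.1)} = Nat.card {x : α × α // Q x} :=
  Nat.card_congr
    ⟨fun x => ⟨(x.1.2, x.1.1), x.2⟩, fun x => ⟨(x.1.2, x.1.1), by simpa using x.2⟩,
      fun x => by ext <;> simp, fun x => by ext <;> simp⟩

private lemma card_pairset_swap' (n : ℕ) (g : Fq[X]) (hg : g.Monic) (hn : g.natDegree ≤ n)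
    (P : Fq[X] → Prop) (s : Fq[X]) :
    Nat.card {ab : Fq[X] × Fq[X] //
        (ab.1.degree < (n : WithBot ℕ) ∧ P ab.1) ∧
        ab.2.degree < (n : WithBot ℕ) ∧ g ∣ ab.2 - ab.1 * s}
      = Nat.card {b : Fq[X] // b.degree < (n : WithBot ℕ) ∧ P b}
        * Fintype.card Fq ^ (n - g.natDegree) := by
  rw [← card_pairset' n g hg hn P s]
  exact card_cond_swap' (fun ab =>
    (ab.2.degree < (n : WithBot ℕ) ∧ P ab.2) ∧
    ab.1.degree < (n : WithBot ℕ) ∧ g ∣ ab.1 - ab.2 * s)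

private lemma card_dvd_set' (n : ℕ) (g : Fq[X]) (hg : g.Monic) (hn : g.natDegree ≤ n) :
    Nat.card {p : Fq[X] // p.degree < (n : WithBot ℕ) ∧ g ∣ p}
      = Fintype.card Fq ^ (n - g.natDegree) := by
  have hg0 : g ≠ 0 := hg.ne_zero
  set Φ : {m : Fq[X] // m.degree < ((n - g.natDegree : ℕ) : WithBot ℕ)}
      → {p : Fq[X] // p.degree < (n : WithBot ℕ) ∧ g ∣ p} :=
    fun m => ⟨g * m.1,
      lt_of_le_of_lt (degree_mul_le _ _) (key_lt' hg hn m.2), Dvd.intro _ rfl⟩ with hΦ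
  have hbij : Function.Bijective Φ := by
    constructor
    · rintro ⟨m, hm⟩ ⟨m', hm'⟩ h
      simp only [hΦ, Subtype.mk.injEq] at h
      exact Subtype.ext (mul_left_cancel₀ hg0 h)
    · rintro ⟨p, hpdeg, m, hm⟩
      refine ⟨⟨m, ?_⟩, Subtype.ext hm.symm⟩
      by_cases hm0 : m = 0
      · subst hm0; simp only [degree_zero]; exact WithBot.bot_lt_coe _
      · have hgm : (g * m).degree < (n : WithBot ℕ) := hm ▸ hpdeg
        rw [degree_mul, degree_eq_natDegree hg0, degree_eq_natDegree hm0] at hgm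
        rw [degree_eq_natDegree hm0]
        rw [Nat.cast_withBot, Nat.cast_withBot, ← WithBot.coe_add, Nat.cast_withBot,
          WithBot.coe_lt_coe] at hgm
        rw [Nat.cast_withBot, Nat.cast_withBot, WithBot.coe_lt_coe]
        omega
  rw [← Nat.card_congr (Equiv.ofBijective Φ hbij), card_degLT']

private lemma card_not_dvd' (n : ℕ) (g : Fq[X]) (hg : g.Monic) (hn : g.natDegree ≤ n) :
    Nat.card {p : Fq[X] // p.degree < (n : WithBot ℕ) ∧ ¬ g ∣ p}
      = Fintype.card Fq ^ n - Fintype.card Fq ^ (n - g.natDegree) := by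
  have hsub : {p : Fq[X] | p.degree < (n : WithBot ℕ) ∧ g ∣ p}
      ⊆ {p : Fq[X] | p.degree < (n : WithBot ℕ)} := fun p hp => hp.1
  have hdiff : {p : Fq[X] | p.degree < (n : WithBot ℕ) ∧ ¬ g ∣ p}
      = {p : Fq[X] | p.degree < (n : WithBot ℕ)}
        \ {p : Fq[X] | p.degree < (n : WithBot ℕ) ∧ g ∣ p} := by
    ext p; simp only [Set.mem_diff, Set.mem_setOf_eq]; tauto
  have h1 : Nat.card {p : Fq[X] // p.degree < (n : WithBot ℕ) ∧ ¬ g ∣ p}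
      = ({p : Fq[X] | p.degree < (n : WithBot ℕ) ∧ ¬ g ∣ p}).ncard :=
    Nat.card_coe_set_eq _
  rw [h1, hdiff, Set.ncard_diff hsub ((finite_degLT' n).subset hsub),
    ← Nat.card_coe_set_eq, ← Nat.card_coe_set_eq, Set.coe_setOf, Set.coe_setOf,
    card_degLT', card_dvd_set' n g hg hn]

private lemma ncard_prod_self' {α : Type*} (A : Set α) :
    (A ×ˢ A).ncard = A.ncard * A.ncard := by
  rw [← Nat.card_coe_set_eq, Nat.card_congr (Equiv.Set.prod A A), Nat.card_prod,
    Nat.card_coe_set_eq]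

private lemma ratio_eq' (Q : ℝ) (hQ : 1 < Q) (n d k : ℕ) (hd : 1 ≤ d) (hk : 1 ≤ k)
    (hkd : k * d ≤ n) :
    ((Q ^ n - Q ^ (n - d)) * Q ^ (n - k * d)) / (Q ^ n * Q ^ n - Q ^ (n - d) * Q ^ (n - d))
      = ((Q ^ d) ^ k)⁻¹ * (Q ^ d / (Q ^ d + 1)) := by
  have hQ0 : (0:ℝ) < Q := lt_trans one_pos hQ
  have hdk : d ≤ k * d := Nat.le_mul_of_pos_left d hk
  have hsm : (k - 1) * d = k * d - d := Nat.sub_one_mul k d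
  have hc1 : d * k = k * d := Nat.mul_comm d k
  have hc2 : d * (k - 1) = (k - 1) * d := Nat.mul_comm d _
  have e1 : Q ^ n = Q ^ (n - k * d) * (Q ^ d) ^ k := by
    rw [← pow_mul, ← pow_add]; congr 1; omega
  have e2 : Q ^ (n - d) = Q ^ (n - k * d) * (Q ^ d) ^ (k - 1) := by
    rw [← pow_mul, ← pow_add]; congr 1; omega
  have e3 : (Q ^ d) ^ k = (Q ^ d) ^ (k - 1) * Q ^ d := by
    rw [← pow_succ]; congr 1; omega
  rw [e1, e2, e3]
  set A := Q ^ (n - k * d) with hA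
  set B := Q ^ d with hB
  set C := B ^ (k - 1) with hC
  have hA0 : A ≠ 0 := (pow_pos hQ0 _).ne'
  have hB1 : 1 < B := one_lt_pow₀ hQ (by omega)
  have hB0 : B ≠ 0 := by positivity
  have hC0 : C ≠ 0 := pow_ne_zero _ hB0
  have hBp1 : B + 1 ≠ 0 := by positivity
  have hden : A * (C * B) * (A * (C * B)) - A * C * (A * C) ≠ 0 := by
    have h : A * (C * B) * (A * (C * B)) - A * C * (A * C) = A * A * C * C * (B * B - 1) := by
      ring
    rw [h]
    have hBB : 1 < B * B := one_lt_mul_of_lt_of_le hB1 (le_of_lt hB1)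
    have hBB' : (0:ℝ) < B * B - 1 := by linarith
    positivity
  rw [div_eq_iff hden]
  field_simp
  ring

end DensityAux

/-- Density of `ℓ`-coprime pairs `(a,b)` with `(a:b) ≡ r (mod ℓ^k)`:
if `ℓ ∤ r` this means `a ≡ b r (mod ℓ^k)` and `ℓ ∤ b`; if `ℓ ∣ r` it means
`b ≡ a r (mod ℓ^k)` and `ℓ ∣ b`.  The density among `ℓ`-coprime pairs equals
`Norm(ℓ)^{-k} · Norm(ℓ)/(Norm(ℓ)+1)`. -/
theorem density_projective_congruence
    (Fq : Type*) [Field Fq] [Fintype Fq]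
    (ℓ : Polynomial Fq) (hmonic : ℓ.Monic) (hirr : Irreducible ℓ)
    (k : ℕ) (hk : 1 ≤ k)
    (r : Polynomial Fq) (hr : r.degree < ((k * ℓ.natDegree : ℕ) : WithBot ℕ)) :
    Filter.Tendsto
      (fun N : ℕ =>
        (({ab : Polynomial Fq × Polynomial Fq |
            ab.1.degree ≤ (N : WithBot ℕ) ∧ ab.2.degree ≤ (N : WithBot ℕ) ∧
            ¬ (ℓ ∣ ab.1 ∧ ℓ ∣ ab.2) ∧
            ((¬ ℓ ∣ r ∧ ℓ ^ k ∣ (ab.1 - ab.2 * r) ∧ ¬ ℓ ∣ ab.2) ∨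
             (ℓ ∣ r ∧ ℓ ^ k ∣ (ab.2 - ab.1 * r) ∧ ℓ ∣ ab.2))}).ncard : ℝ) /
        (({ab : Polynomial Fq × Polynomial Fq |
            ab.1.degree ≤ (N : WithBot ℕ) ∧ ab.2.degree ≤ (N : WithBot ℕ) ∧
            ¬ (ℓ ∣ ab.1 ∧ ℓ ∣ ab.2)}).ncard : ℝ))
      Filter.atTop
      (nhds ((((Fintype.card Fq : ℝ) ^ ℓ.natDegree) ^ k)⁻¹ *
        ((Fintype.card Fq : ℝ) ^ ℓ.natDegree / ((Fintype.card Fq : ℝ) ^ ℓ.natDegree + 1)))) := by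
  classical
  set q := Fintype.card Fq with hq
  set d := ℓ.natDegree with hdd
  have hd1 : 1 ≤ d := hirr.natDegree_pos
  have hq1 : 1 < q := Fintype.one_lt_card
  refine Filter.Tendsto.congr' ?_ tendsto_const_nhds
  filter_upwards [eventually_ge_atTop (k * d)] with N hN
  set n := N + 1 with hn
  have hkdn : k * d ≤ n := by omega
  have hdn : d ≤ n := le_trans (Nat.le_mul_of_pos_left d hk) hkdn
  have hgmon : (ℓ ^ k).Monic := hmonic.pow k
  have hgdeg : (ℓ ^ k).natDegree = k * d := by rw [natDegree_pow]
  -- numerator count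
  have hnum : ({ab : Polynomial Fq × Polynomial Fq |
      ab.1.degree ≤ (N : WithBot ℕ) ∧ ab.2.degree ≤ (N : WithBot ℕ) ∧
      ¬ (ℓ ∣ ab.1 ∧ ℓ ∣ ab.2) ∧
      ((¬ ℓ ∣ r ∧ ℓ ^ k ∣ (ab.1 - ab.2 * r) ∧ ¬ ℓ ∣ ab.2) ∨
       (ℓ ∣ r ∧ ℓ ^ k ∣ (ab.2 - ab.1 * r) ∧ ℓ ∣ ab.2))}).ncard
      = (q ^ n - q ^ (n - d)) * q ^ (n - k * d) := by
    by_cases hℓr : ℓ ∣ r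
    · have hbof : ∀ a b : Polynomial Fq, ℓ ^ k ∣ b - a * r → ℓ ∣ b := by
        intro a b h
        have h1 : ℓ ∣ b - a * r := dvd_trans (dvd_pow_self ℓ (by omega : k ≠ 0)) h
        have h2 : ℓ ∣ a * r := hℓr.mul_left a
        have h3 := dvd_add h1 h2
        rwa [sub_add_cancel] at h3
      have hset : {ab : Polynomial Fq × Polynomial Fq |
          ab.1.degree ≤ (N : WithBot ℕ) ∧ ab.2.degree ≤ (N : WithBot ℕ) ∧
          ¬ (ℓ ∣ ab.1 ∧ ℓ ∣ ab.2) ∧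
          ((¬ ℓ ∣ r ∧ ℓ ^ k ∣ (ab.1 - ab.2 * r) ∧ ¬ ℓ ∣ ab.2) ∨
           (ℓ ∣ r ∧ ℓ ^ k ∣ (ab.2 - ab.1 * r) ∧ ℓ ∣ ab.2))}
          = {ab : Polynomial Fq × Polynomial Fq |
              (ab.1.degree < (n : WithBot ℕ) ∧ ¬ ℓ ∣ ab.1) ∧
              ab.2.degree < (n : WithBot ℕ) ∧ ℓ ^ k ∣ ab.2 - ab.1 * r} := by
        ext ⟨a, b⟩
        simp only [Set.mem_setOf_eq, hn, deg_lt_succ_iff']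
        constructor
        · rintro ⟨ha, hb, hcop, hdisj⟩
          rcases hdisj with ⟨hnr, _, _⟩ | ⟨_, hdvd, hlb⟩
          · exact absurd hℓr hnr
          · exact ⟨⟨ha, fun hla => hcop ⟨hla, hlb⟩⟩, hb, hdvd⟩
        · rintro ⟨⟨ha, hna⟩, hb, hdvd⟩
          exact ⟨ha, hb, fun h => hna h.1, Or.inr ⟨hℓr, hdvd, hbof _ _ hdvd⟩⟩
      rw [hset, ← Nat.card_coe_set_eq, Set.coe_setOf,
        card_pairset_swap' n (ℓ ^ k) hgmon (hgdeg ▸ hkdn) (fun p => ¬ ℓ ∣ p) r,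
        card_not_dvd' n ℓ hmonic hdn, hgdeg]
    · have hset : {ab : Polynomial Fq × Polynomial Fq |
          ab.1.degree ≤ (N : WithBot ℕ) ∧ ab.2.degree ≤ (N : WithBot ℕ) ∧
          ¬ (ℓ ∣ ab.1 ∧ ℓ ∣ ab.2) ∧
          ((¬ ℓ ∣ r ∧ ℓ ^ k ∣ (ab.1 - ab.2 * r) ∧ ¬ ℓ ∣ ab.2) ∨
           (ℓ ∣ r ∧ ℓ ^ k ∣ (ab.2 - ab.1 * r) ∧ ℓ ∣ ab.2))}
          = {ab : Polynomial Fq × Polynomial Fq |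
              (ab.2.degree < (n : WithBot ℕ) ∧ ¬ ℓ ∣ ab.2) ∧
              ab.1.degree < (n : WithBot ℕ) ∧ ℓ ^ k ∣ ab.1 - ab.2 * r} := by
        ext ⟨a, b⟩
        simp only [Set.mem_setOf_eq, hn, deg_lt_succ_iff']
        constructor
        · rintro ⟨ha, hb, hcop, hdisj⟩
          rcases hdisj with ⟨_, hdvd, hnb⟩ | ⟨hlr, _, _⟩
          · exact ⟨⟨hb, hnb⟩, ha, hdvd⟩
          · exact absurd hlr hℓr
        · rintro ⟨⟨hb, hnb⟩, ha, hdvd⟩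
          exact ⟨ha, hb, fun h => hnb h.2, Or.inl ⟨hℓr, hdvd, hnb⟩⟩
      rw [hset, ← Nat.card_coe_set_eq, Set.coe_setOf,
        card_pairset' n (ℓ ^ k) hgmon (hgdeg ▸ hkdn) (fun p => ¬ ℓ ∣ p) r,
        card_not_dvd' n ℓ hmonic hdn, hgdeg]
  -- denominator count
  have hden : ({ab : Polynomial Fq × Polynomial Fq |
      ab.1.degree ≤ (N : WithBot ℕ) ∧ ab.2.degree ≤ (N : WithBot ℕ) ∧
      ¬ (ℓ ∣ ab.1 ∧ ℓ ∣ ab.2)}).ncard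
      = q ^ n * q ^ n - q ^ (n - d) * q ^ (n - d) := by
    set A : Set (Polynomial Fq) := {p | p.degree < (n : WithBot ℕ)} with hA
    set B : Set (Polynomial Fq) := {p | p.degree < (n : WithBot ℕ) ∧ ℓ ∣ p} with hB
    have hsub : B ⊆ A := fun p hp => hp.1
    have hsubP : B ×ˢ B ⊆ A ×ˢ A := Set.prod_mono hsub hsub
    have hBfin : B.Finite := (finite_degLT' n).subset hsub
    have hset : {ab : Polynomial Fq × Polynomial Fq |
        ab.1.degree ≤ (N : WithBot ℕ) ∧ ab.2.degree ≤ (N : WithBot ℕ) ∧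
        ¬ (ℓ ∣ ab.1 ∧ ℓ ∣ ab.2)} = (A ×ˢ A) \ (B ×ˢ B) := by
      ext ⟨a, b⟩
      simp only [Set.mem_diff, Set.mem_prod, Set.mem_setOf_eq, hA, hB, hn, deg_lt_succ_iff']
      tauto
    rw [hset, Set.ncard_diff hsubP (hBfin.prod hBfin), ncard_prod_self', ncard_prod_self',
      ← Nat.card_coe_set_eq, ← Nat.card_coe_set_eq, hA, hB, Set.coe_setOf,
      Set.coe_setOf, card_degLT', card_dvd_set' n ℓ hmonic hdn]
  rw [hnum, hden]
  have hle1 : q ^ (n - d) ≤ q ^ n := Nat.pow_le_pow_right (le_of_lt hq1) (Nat.sub_le n d)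
  have hle2 : q ^ (n - d) * q ^ (n - d) ≤ q ^ n * q ^ n := Nat.mul_le_mul hle1 hle1
  rw [Nat.cast_mul, Nat.cast_sub hle1, Nat.cast_sub hle2, Nat.cast_mul]
  push_cast
  have hQ1 : (1 : ℝ) < (q : ℝ) := by exact_mod_cast hq1
  exact (ratio_eq' (q : ℝ) hQ1 n d k hd1 hk hkdn).symm
end

section
/- Let q ≥ 2 be a prime power and, for each integer k ≥ 1, let I_k denote the number of monic irreducible polynomials of degree k in F_q[t]. Then the series Σ_{k ≥ 1} k·I_k/(q^{2k} − 1) converges and its sum equals 1/(q − 1). -/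
open Polynomial UniqueFactorizationMonoid
open scoped ENNReal

private lemma aux_pow_sub_one_dvd {q d n : ℕ} (hq : 2 ≤ q) (hd : 0 < d)
    (h : q ^ d - 1 ∣ q ^ n - 1) : d ∣ n := by
  have key : ∀ m : ℕ, q ^ d - 1 ∣ q ^ m - 1 → d ∣ m := by
    intro m
    induction m using Nat.strong_induction_on with
    | _ m ih =>
      intro hm
      rcases Nat.eq_zero_or_pos m with h0 | h0
      · simp [h0]
      rcases lt_or_ge m d with hlt | hle
      · -- m < d : show m = 0 contradiction
        exfalso
        have h1 : q ^ m - 1 < q ^ d - 1 := by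
          have h5 : q ^ m < q ^ d := Nat.pow_lt_pow_right (by omega : 1 < q) hlt
          have h6 : 1 ≤ q ^ m := Nat.one_le_pow _ _ (by omega)
          omega
        have h2 : 0 < q ^ m - 1 := by
          have := Nat.one_lt_pow (by omega : m ≠ 0) (by omega : 1 < q)
          omega
        have := Nat.le_of_dvd h2 hm
        omega
      · -- m ≥ d : q^m - 1 = q^{m-d} * (q^d - 1) + (q^{m-d} - 1)
        have hqm : q ^ m - 1 = q ^ (m - d) * (q ^ d - 1) + (q ^ (m - d) - 1) := by
          have h1 : q ^ (m - d) * q ^ d = q ^ m := by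
            rw [← pow_add]; congr 1; omega
          have h2 : 1 ≤ q ^ d := Nat.one_le_pow _ _ (by omega)
          have h3 : 1 ≤ q ^ (m - d) := Nat.one_le_pow _ _ (by omega)
          have h4 : q ^ (m-d) ≤ q ^ (m-d) * q ^ d := Nat.le_mul_of_pos_right _ (by omega)
          rw [Nat.mul_sub, h1]; omega
        have hdvd2 : q ^ d - 1 ∣ q ^ (m - d) - 1 := by
          have := (Nat.dvd_add_right (Dvd.intro_left _ rfl)).mp (hqm ▸ hm)
          exact this
        have h7 := ih (m - d) (by omega) hdvd2
        have : d ∣ (m - d) + d := Nat.dvd_add h7 dvd_rfl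
        rwa [Nat.sub_add_cancel hle] at this
  exact key n h

private lemma aux_finite {Fq : Type*} [Field Fq] [Fintype Fq] (k : ℕ) :
    {p : Polynomial Fq | p.Monic ∧ Irreducible p ∧ p.natDegree = k}.Finite := by
  have hle : {p : Polynomial Fq | p.natDegree ≤ k}.Finite := by
    have hinj : Set.InjOn (fun p : Polynomial Fq => fun i : Fin (k+1) => p.coeff i)
        {p | p.natDegree ≤ k} := by
      intro p hp r hr hpr
      ext i
      by_cases hi : i ≤ k
      · exact congrFun hpr ⟨i, Nat.lt_succ_of_le hi⟩
      · rw [coeff_eq_zero_of_natDegree_lt (by simp only [Set.mem_setOf_eq] at hp; omega),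
          coeff_eq_zero_of_natDegree_lt (by simp only [Set.mem_setOf_eq] at hr; omega)]
    exact Set.Finite.of_finite_image (Set.toFinite _) hinj
  exact hle.subset (fun p hp => le_of_eq hp.2.2)

private lemma aux_dvd_iff {Fq : Type*} [Field Fq] [Fintype Fq]
    {P : Polynomial Fq} (hm : P.Monic) (hi : Irreducible P) (n : ℕ) :
    P ∣ (X ^ (Fintype.card Fq) ^ n - X) ↔ P.natDegree ∣ n := by
  haveI : Fact (Irreducible P) := ⟨hi⟩
  set q := Fintype.card Fq with hqdef
  have hq : 1 < q := Fintype.one_lt_card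
  have hP0 : P ≠ 0 := hm.ne_zero
  set d := P.natDegree with hddef
  have hd : 0 < d := hi.natDegree_pos
  set K := AdjoinRoot P with hK
  let pb := AdjoinRoot.powerBasis hP0
  haveI : Fintype K := Module.fintypeOfFintype pb.basis
  have hcardK : Fintype.card K = q ^ d := by
    rw [Module.card_fintype pb.basis, Fintype.card_fin, AdjoinRoot.powerBasis_dim]
  set α := AdjoinRoot.root P with hα
  have key : ∀ m : ℕ, P ∣ (X ^ m - X) ↔ α ^ m = α := by
    intro m
    rw [← AdjoinRoot.mk_eq_zero, map_sub, map_pow, AdjoinRoot.mk_X, sub_eq_zero]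
  rw [key]
  constructor
  · -- α ^ q^n = α → d ∣ n
    intro hroot
    -- char p setup
    obtain ⟨p, hcharFq⟩ := CharP.exists Fq
    obtain ⟨e, hp, hcard⟩ := FiniteField.card Fq p
    haveI : CharP K p := charP_of_injective_algebraMap (algebraMap Fq K).injective p
    haveI : Fact p.Prime := ⟨hp⟩
    have hqn : q ^ n = p ^ ((e : ℕ) * n) := by rw [hqdef, hcard, ← pow_mul]
    -- the iterated Frobenius as an AlgHom
    let φ : K →+* K := iterateFrobenius K p ((e : ℕ) * n)
    have hφ : ∀ x : K, φ x = x ^ q ^ n := by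
      intro x; rw [iterateFrobenius_def, hqn]
    have hcomm : ∀ a : Fq, φ (algebraMap Fq K a) = algebraMap Fq K a := by
      intro a
      rw [hφ, ← map_pow]
      congr 1
      exact FiniteField.pow_card_pow n a
    let ψ : K →ₐ[Fq] K := { φ with commutes' := hcomm }
    have hψ : ψ = AlgHom.id Fq K := by
      apply AdjoinRoot.algHom_ext
      show φ α = α
      rw [hφ]; exact hroot
    have hall : ∀ x : K, x ^ q ^ n = x := by
      intro x
      have := congrFun (congrArg (fun f : K →ₐ[Fq] K => (f : K → K)) hψ) x
      simpa [ψ, hφ] using this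
    have hdvd : Fintype.card K - 1 ∣ q ^ n - 1 := by
      rw [← FiniteField.forall_pow_eq_one_iff]
      intro x
      have hx : (x : K) ≠ 0 := Units.ne_zero x
      have h1 : (x : K) ^ (q ^ n - 1) * (x : K) = (x : K) ^ (q ^ n) := by
        rw [← pow_succ]
        congr 1
        have : 1 ≤ q ^ n := Nat.one_le_pow _ _ (by omega)
        omega
      have h2 : (x : K) ^ (q ^ n - 1) = 1 := by
        have := hall (x : K)
        rw [this] at h1
        exact mul_right_cancel₀ hx (h1.trans (one_mul _).symm)
      ext
      simpa using h2
    rw [hcardK] at hdvd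
    exact aux_pow_sub_one_dvd hq hd hdvd
  · -- d ∣ n → α ^ q^n = α
    rintro ⟨m, rfl⟩
    rw [pow_mul, ← hcardK]
    exact FiniteField.pow_card_pow m α

private lemma aux_count {Fq : Type*} [Field Fq] [Fintype Fq] (n : ℕ) (hn : 0 < n) :
    ∑ d ∈ n.divisors,
        d * ({p : Polynomial Fq | p.Monic ∧ Irreducible p ∧ p.natDegree = d}).ncard
      = (Fintype.card Fq) ^ n := by
  classical
  set q := Fintype.card Fq with hqdef
  have hq : 1 < q := Fintype.one_lt_card
  have hqn : 1 < q ^ n := Nat.one_lt_pow (by omega) hq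
  set g : Polynomial Fq := X ^ (q ^ n) - X with hg
  have hmonic : g.Monic := by
    apply monic_X_pow_sub
    rw [degree_X]
    exact_mod_cast hqn
  have hg0 : g ≠ 0 := hmonic.ne_zero
  have hdeg : g.natDegree = q ^ n := by
    have h1 : (X : Polynomial Fq).degree < (X ^ (q ^ n) : Polynomial Fq).degree := by
      rw [degree_X, degree_X_pow]
      exact_mod_cast hqn
    have := degree_sub_eq_left_of_degree_lt h1
    rw [degree_X_pow] at this
    exact natDegree_eq_of_degree_eq_some (hg ▸ this)
  -- separable, hence squarefree
  have hsep : g.Separable := by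
    have hder : derivative g = -1 := by
      rw [hg, derivative_sub, derivative_X_pow, derivative_X]
      have : ((q ^ n : ℕ) : Fq) = 0 := by
        rw [Nat.cast_pow, hqdef, FiniteField.cast_card_eq_zero, zero_pow (by omega)]
      rw [this, map_zero, zero_mul, zero_sub]
    rw [Separable, hder]
    exact (isCoprime_one_right).neg_right
  have hsq : Squarefree g := hsep.squarefree
  set M := normalizedFactors g with hM
  have hnodup : M.Nodup := (squarefree_iff_nodup_normalizedFactors hg0).mp hsq
  have hfac_monic : ∀ P ∈ M, P.Monic := by
    intro P hP
    have h1 := normalize_normalized_factor P hP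
    have h2 : P ≠ 0 := (irreducible_of_normalized_factor P hP).ne_zero
    have := monic_normalize h2
    rwa [h1] at this
  have h0M : (0 : Polynomial Fq) ∉ M := by
    intro h
    exact (irreducible_of_normalized_factor 0 h).ne_zero rfl
  have hprod : M.prod = g := by
    apply eq_of_monic_of_associated _ hmonic (prod_normalizedFactors hg0)
    have := monic_multiset_prod_of_monic M id (fun P hP => hfac_monic P hP)
    rwa [Multiset.map_id] at this
  have hdegsum : (M.map natDegree).sum = q ^ n := by
    rw [← natDegree_multiset_prod M h0M, hprod, hdeg]
  -- membership characterization
  have hmem : ∀ P : Polynomial Fq, P ∈ M ↔ P.Monic ∧ Irreducible P ∧ P.natDegree ∣ n := by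
    intro P
    constructor
    · intro hP
      have hPm := hfac_monic P hP
      have hPi := irreducible_of_normalized_factor P hP
      exact ⟨hPm, hPi, (aux_dvd_iff hPm hPi n).mp (dvd_of_mem_normalizedFactors hP)⟩
    · rintro ⟨hPm, hPi, hPd⟩
      have hPdvd : P ∣ g := (aux_dvd_iff hPm hPi n).mpr hPd
      obtain ⟨Q, hQ, hassoc⟩ := exists_mem_normalizedFactors_of_dvd hg0 hPi hPdvd
      have : P = Q := eq_of_monic_of_associated hPm (hfac_monic Q hQ) hassoc
      rwa [this]
  set T : Finset (Polynomial Fq) := M.toFinset with hT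
  have hTsum : ∑ P ∈ T, P.natDegree = q ^ n := by
    rw [← hdegsum]
    show (T.val.map natDegree).sum = (M.map natDegree).sum
    rw [hT, Multiset.toFinset_val, Multiset.dedup_eq_self.mpr hnodup]
  have hmaps : ∀ P ∈ T, P.natDegree ∈ n.divisors := by
    intro P hP
    rw [hT, Multiset.mem_toFinset, hmem] at hP
    exact Nat.mem_divisors.mpr ⟨hP.2.2, by omega⟩
  rw [← Finset.sum_fiberwise_of_maps_to hmaps (fun P => P.natDegree)] at hTsum
  rw [← hTsum]
  apply Finset.sum_congr rfl
  intro d hd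
  have hdn : d ∣ n := (Nat.mem_divisors.mp hd).1
  haveI : Fintype ({p : Polynomial Fq | p.Monic ∧ Irreducible p ∧ p.natDegree = d} : Set _) :=
    (aux_finite d).fintype
  have hfilter : T.filter (fun P => P.natDegree = d)
      = Set.toFinset {p : Polynomial Fq | p.Monic ∧ Irreducible p ∧ p.natDegree = d} := by
    ext P
    rw [Finset.mem_filter, hT, Multiset.mem_toFinset, hmem, Set.mem_toFinset]
    constructor
    · rintro ⟨⟨h1, h2, h3⟩, h4⟩; exact ⟨h1, h2, h4⟩
    · rintro ⟨h1, h2, h3⟩; exact ⟨⟨h1, h2, h3 ▸ hdn⟩, h3⟩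
  rw [Set.ncard_eq_toFinset_card']
  rw [hfilter.symm] -- LHS currently : d * card
  rw [Finset.sum_congr rfl (fun P hP => (Finset.mem_filter.mp hP).2)]
  rw [Finset.sum_const, smul_eq_mul, mul_comm]

private lemma aux_geom {z : ℝ≥0∞} (hz1 : 1 < z) (hzt : z ≠ ⊤) :
    ∑' m : ℕ, z⁻¹ ^ (m + 1) = (z - 1)⁻¹ := by
  have hz0 : z ≠ 0 := (zero_lt_one.trans hz1).ne'
  have hinv : z⁻¹ ≠ ⊤ := ENNReal.inv_ne_top.mpr hz0
  have hcalc : ∑' m : ℕ, z⁻¹ ^ (m + 1) = (1 - z⁻¹)⁻¹ * z⁻¹ := by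
    simp_rw [pow_succ]
    rw [ENNReal.tsum_mul_right, ENNReal.tsum_geometric]
  rw [hcalc]
  have h1 : (1 : ℝ≥0∞) - z⁻¹ = (z - 1) * z⁻¹ := by
    rw [ENNReal.sub_mul (fun _ _ => hinv), ENNReal.mul_inv_cancel hz0 hzt, one_mul]
  have hz10 : z - 1 ≠ 0 := by
    rw [ne_eq, tsub_eq_zero_iff_le]
    exact not_le.mpr hz1
  rw [h1, ENNReal.mul_inv (Or.inl hz10) (Or.inl (by simp [hzt, lt_top_iff_ne_top.mp (lt_of_le_of_lt tsub_le_self (lt_top_iff_ne_top.mpr hzt))])), inv_inv,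
    mul_assoc, ENNReal.mul_inv_cancel hz0 hzt, mul_one]

/-- If `I_k` is the number of monic irreducible polynomials of degree `k`
over the finite field `F_q`, then `Σ_{k ≥ 1} k I_k / (q^{2k} - 1)` converges to `1/(q-1)`.
(The term at `k = 0` vanishes.) -/
theorem sum_irreducible_count_div (Fq : Type*) [Field Fq] [Fintype Fq] :
    Summable (fun k : ℕ => (k : ℝ) *
        (({p : Polynomial Fq | p.Monic ∧ Irreducible p ∧ p.natDegree = k}).ncard : ℝ) /
        ((Fintype.card Fq : ℝ) ^ (2 * k) - 1)) ∧
    ∑' k : ℕ, (k : ℝ) *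
        (({p : Polynomial Fq | p.Monic ∧ Irreducible p ∧ p.natDegree = k}).ncard : ℝ) /
        ((Fintype.card Fq : ℝ) ^ (2 * k) - 1) = 1 / ((Fintype.card Fq : ℝ) - 1) := by
  classical
  set q := Fintype.card Fq with hqdef
  have hq : 1 < q := Fintype.one_lt_card
  set I : ℕ → ℕ :=
    fun k => ({p : Polynomial Fq | p.Monic ∧ Irreducible p ∧ p.natDegree = k}).ncard with hI
  set Q : ℝ≥0∞ := (q : ℝ≥0∞) with hQ
  have hQ1 : 1 < Q := by rw [hQ]; exact_mod_cast hq
  have hQt : Q ≠ ⊤ := ENNReal.natCast_ne_top q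
  have hQ0 : Q ≠ 0 := (zero_lt_one.trans hQ1).ne'
  set a : ℕ → ℝ≥0∞ := fun k => ((k * I k : ℕ) : ℝ≥0∞) with ha
  have ha0 : a 0 = 0 := by simp [ha]
  have hat : ∀ k, a k ≠ ⊤ := fun k => ENNReal.natCast_ne_top _
  have hdiv : ∀ n : ℕ, n ≠ 0 → ∑ d ∈ n.divisors, a d = Q ^ n := by
    intro n hn
    have hcount := aux_count (Fq := Fq) n (by omega)
    calc ∑ d ∈ n.divisors, a d = ((∑ d ∈ n.divisors, d * I d : ℕ) : ℝ≥0∞) := by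
          rw [ha, Nat.cast_sum]
      _ = ((q ^ n : ℕ) : ℝ≥0∞) := by rw [hI, hqdef, hcount]
      _ = Q ^ n := by rw [hQ, Nat.cast_pow]
  set F : ℕ → ℕ → ℝ≥0∞ :=
    fun k n => if k ∣ n ∧ n ≠ 0 then a k * Q⁻¹ ^ (2 * n) else 0 with hF
  set t : ℕ → ℝ≥0∞ := fun k => a k * (Q ^ (2 * k) - 1)⁻¹ with ht
  have hzk : ∀ k : ℕ, k ≠ 0 → 1 < Q ^ (2 * k) ∧ Q ^ (2 * k) ≠ ⊤ := by
    intro k hk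
    exact ⟨one_lt_pow₀ hQ1 (by omega), ENNReal.pow_ne_top hQt⟩
  -- Step A
  have stepA : ∀ k, ∑' n, F k n = t k := by
    intro k
    rcases eq_or_ne k 0 with rfl | hk
    · have h0 : ∀ n, F 0 n = 0 := by
        intro n
        rw [hF]
        simp only
        split
        · rw [ha0, zero_mul]
        · rfl
      rw [tsum_congr h0, ht]
      simp [ha0]
    · have hinj : Function.Injective (fun m : ℕ => k * (m + 1)) := by
        intro x y h
        simp only at h
        have := Nat.eq_of_mul_eq_mul_left (by omega : 0 < k) h
        omega
      have hsupp : Function.support (F k) ⊆ Set.range (fun m : ℕ => k * (m + 1)) := by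
        intro n hn
        rw [Function.mem_support, hF] at hn
        simp only at hn
        by_cases hcond : k ∣ n ∧ n ≠ 0
        · obtain ⟨⟨s, rfl⟩, hn0⟩ := hcond
          have hs : s ≠ 0 := by rintro rfl; simp at hn0
          exact ⟨s - 1, by simp only; congr 1; omega⟩
        · rw [if_neg hcond] at hn; exact absurd rfl hn
      rw [← Function.Injective.tsum_eq hinj hsupp]
      have hterm : ∀ m, F k (k * (m + 1)) = a k * (Q⁻¹ ^ (2 * k)) ^ (m + 1) := by
        intro m
        rw [hF]
        simp only
        rw [if_pos ⟨Dvd.intro _ rfl, by positivity⟩, ← pow_mul]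
        congr 1
        ring
      rw [tsum_congr hterm, ENNReal.tsum_mul_left, ht]
      congr 1
      rw [← ENNReal.inv_pow]
      exact aux_geom (hzk k hk).1 (hzk k hk).2
  -- Step B
  have stepB : ∀ n, ∑' k, F k n = if n = 0 then 0 else Q⁻¹ ^ n := by
    intro n
    rcases eq_or_ne n 0 with rfl | hn
    · simp [hF]
    · rw [if_neg hn]
      rw [tsum_eq_sum (s := n.divisors) (fun k hk => by
        rw [hF]; simp only; rw [if_neg]
        rintro ⟨h1, h2⟩
        exact hk (Nat.mem_divisors.mpr ⟨h1, h2⟩))]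
      calc ∑ k ∈ n.divisors, F k n = ∑ k ∈ n.divisors, a k * Q⁻¹ ^ (2 * n) := by
            apply Finset.sum_congr rfl
            intro k hk
            rw [hF]
            simp only
            rw [if_pos (Nat.mem_divisors.mp hk)]
        _ = (∑ k ∈ n.divisors, a k) * Q⁻¹ ^ (2 * n) := (Finset.sum_mul _ _ _).symm
        _ = Q ^ n * Q⁻¹ ^ (2 * n) := by rw [hdiv n hn]
        _ = Q⁻¹ ^ n := by
            rw [two_mul, pow_add, ← mul_assoc, ← mul_pow,
              ENNReal.mul_inv_cancel hQ0 hQt, one_pow, one_mul]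
  -- Step C
  have stepC : ∑' k, t k = (Q - 1)⁻¹ := by
    calc ∑' k, t k = ∑' k, ∑' n, F k n := (tsum_congr stepA).symm
      _ = ∑' n, ∑' k, F k n := ENNReal.tsum_comm
      _ = ∑' n, (if n = 0 then 0 else Q⁻¹ ^ n) := tsum_congr stepB
      _ = ∑' m : ℕ, Q⁻¹ ^ (m + 1) := by
          rw [← Function.Injective.tsum_eq (g := fun m : ℕ => m + 1)
            (fun x y h => by simpa using h)
            (by
              intro n hn
              rw [Function.mem_support] at hn
              rcases eq_or_ne n 0 with rfl | h0
              · simp at hn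
              · exact ⟨n - 1, by show n - 1 + 1 = n; omega⟩)]
          apply tsum_congr
          intro m
          rw [if_neg (by omega)]
      _ = (Q - 1)⁻¹ := aux_geom hQ1 hQt
  -- finiteness of each term
  have htne : ∀ k, t k ≠ ⊤ := by
    intro k
    rcases eq_or_ne k 0 with rfl | hk
    · rw [ht]; simp [ha0]
    · rw [ht]
      exact ENNReal.mul_ne_top (hat k) (ENNReal.inv_ne_top.mpr (by
        rw [ne_eq, tsub_eq_zero_iff_le]
        exact not_le.mpr (hzk k hk).1))
  have hsumne : ∑' k, t k ≠ ⊤ := by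
    rw [stepC]
    exact ENNReal.inv_ne_top.mpr (by
      rw [ne_eq, tsub_eq_zero_iff_le]
      exact not_le.mpr hQ1)
  -- real values
  have hreal : ∀ k : ℕ, (k : ℝ) * ((I k : ℕ) : ℝ) / ((q : ℝ) ^ (2 * k) - 1)
      = (t k).toReal := by
    intro k
    rcases eq_or_ne k 0 with rfl | hk
    · rw [ht]
      simp [ha0]
    · rw [ht]
      simp only
      rw [ENNReal.toReal_mul, ENNReal.toReal_inv,
        ENNReal.toReal_sub_of_le (hzk k hk).1.le (hzk k hk).2]
      rw [hQ]
      simp only [ha, ENNReal.toReal_pow, ENNReal.toReal_natCast, ENNReal.toReal_one]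
      push_cast
      rw [div_eq_mul_inv]
  constructor
  · have hs := ENNReal.summable_toReal hsumne
    have : (fun k : ℕ => (t k).toReal)
        = fun k : ℕ => (k : ℝ) * ((I k : ℕ) : ℝ) / ((q : ℝ) ^ (2 * k) - 1) :=
      funext (fun k => (hreal k).symm)
    rw [this] at hs
    exact hs
  · calc ∑' k : ℕ, (k : ℝ) * ((I k : ℕ) : ℝ) / ((q : ℝ) ^ (2 * k) - 1)
        = ∑' k : ℕ, (t k).toReal := tsum_congr hreal
      _ = (∑' k : ℕ, t k).toReal := (ENNReal.tsum_toReal_eq htne).symm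
      _ = ((Q - 1)⁻¹).toReal := by rw [stepC]
      _ = 1 / ((q : ℝ) - 1) := by
          rw [ENNReal.toReal_inv, ENNReal.toReal_sub_of_le hQ1.le hQt, hQ]
          simp [one_div]
end

section
/- Let q be a prime power, f ∈ F_q[t][x], and k ≥ 1 an integer. Then k · #{(ℓ, r) : ℓ ∈ F_q[t] monic irreducible of degree k, r ∈ F_q[t] with deg r < k, and f(r) ≡ 0 (mod ℓ)} = #{(t_0, x_0) ∈ F_{q^k} × F_{q^k} : f(t_0, x_0) = 0 and t_0 generates F_{q^k} over F_q (i.e., t_0 lies in no proper subfield of F_{q^k})}, where f(t_0, x_0) denotes the evaluation of f at t = t_0 and x = x_0. -/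
open Polynomial

/-- Evaluation of `f ∈ F_q[t][x]` at `(t₀, x₀) ∈ F_{q^k}²`: evaluate each coefficient
(a polynomial in `t`) at `t₀` and then the resulting polynomial in `x` at `x₀`. -/
noncomputable def evalTX {Fq Fqk : Type*} [Field Fq] [Field Fqk] [Algebra Fq Fqk]
    (f : Polynomial (Polynomial Fq)) (t₀ x₀ : Fqk) : Fqk :=
  (f.map (Polynomial.aeval t₀).toRingHom).eval x₀

section Aux

variable {Fq : Type*} [Field Fq] [Fintype Fq]
variable {Fqk : Type*} [Field Fqk] [Fintype Fqk] [Algebra Fq Fqk]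

lemma evalTX_aeval (f : Polynomial (Polynomial Fq)) (t₀ : Fqk) (r : Polynomial Fq) :
    evalTX f t₀ ((aeval t₀) r) = (aeval t₀) (f.eval r) := by
  unfold evalTX
  rw [eval_map]
  exact Polynomial.eval₂_at_apply (Polynomial.aeval t₀).toRingHom r

lemma card_roots_aeval {k : ℕ} (hk : 1 ≤ k) (hrank : Module.finrank Fq Fqk = k)
    {ℓ : Polynomial Fq} (hm : ℓ.Monic) (hi : Irreducible ℓ) (hd : ℓ.natDegree = k) :
    Nat.card {t₀ : Fqk // (aeval t₀) ℓ = 0} = k := by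
  classical
  have hq : 1 < Fintype.card Fq := Fintype.one_lt_card
  have hcardk : Fintype.card Fqk = Fintype.card Fq ^ k := by
    rw [Module.card_eq_pow_finrank (K := Fq) (V := Fqk), hrank]
  haveI : Fact (Irreducible ℓ) := ⟨hi⟩
  have hℓ0 : ℓ ≠ 0 := hm.ne_zero
  haveI : Module.Finite Fq (AdjoinRoot ℓ) :=
    Module.Finite.of_basis (AdjoinRoot.powerBasis hℓ0).basis
  haveI : Finite (AdjoinRoot ℓ) := Module.finite_of_finite Fq
  haveI : Fintype (AdjoinRoot ℓ) := Fintype.ofFinite _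
  have hcardA : Fintype.card (AdjoinRoot ℓ) = Fintype.card Fq ^ k := by
    rw [Module.card_eq_pow_finrank (K := Fq), (AdjoinRoot.powerBasis hℓ0).finrank,
      AdjoinRoot.powerBasis_dim, hd]
  have hroot : (AdjoinRoot.root ℓ) ^ (Fintype.card Fq ^ k) = AdjoinRoot.root ℓ := by
    rw [← hcardA]; exact FiniteField.pow_card _
  have hmin : minpoly Fq (AdjoinRoot.root ℓ) = ℓ := by
    rw [AdjoinRoot.minpoly_root hℓ0, hm.leadingCoeff, inv_one, map_one, mul_one]
  have hdvd : ℓ ∣ (X ^ Fintype.card Fq ^ k - X : Polynomial Fq) := by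
    rw [← hmin]
    exact minpoly.dvd _ _ (by simp [hroot])
  set φ := algebraMap Fq Fqk
  set m := ℓ.map φ with hmdef
  have hm0 : m ≠ 0 := (hm.map φ).ne_zero
  have hmdvd : m ∣ (X ^ Fintype.card Fq ^ k - X : Polynomial Fqk) := by
    have := Polynomial.map_dvd φ hdvd
    simpa using this
  have hbig0 : (X ^ Fintype.card Fq ^ k - X : Polynomial Fqk) ≠ 0 :=
    FiniteField.X_pow_card_pow_sub_X_ne_zero _ (by omega) hq
  have hroots_big : (X ^ Fintype.card Fq ^ k - X : Polynomial Fqk).roots = Finset.univ.val := by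
    rw [← hcardk]; exact FiniteField.roots_X_pow_card_sub_X Fqk
  have hnodup : m.roots.Nodup :=
    Multiset.nodup_of_le (Polynomial.roots.le_of_dvd hbig0 hmdvd)
      (by rw [hroots_big]; exact Finset.univ.nodup)
  have hbig_splits : ((X ^ Fintype.card Fq ^ k - X : Polynomial Fqk)).Splits := by
    rw [Polynomial.splits_iff_card_roots, hroots_big,
      FiniteField.X_pow_card_pow_sub_X_natDegree_eq _ (by omega : k ≠ 0) hq]
    simp [hcardk]
  have hmsplits : m.Splits :=
    hbig_splits.of_dvd hbig0 hmdvd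
  have hmcard : m.roots.card = k := by
    rw [Polynomial.splits_iff_card_roots.mp hmsplits, hmdef, natDegree_map, hd]
  have hset : (Finset.univ.filter (fun t₀ : Fqk => (aeval t₀) ℓ = 0)) = m.roots.toFinset := by
    ext x
    simp only [Finset.mem_filter, Finset.mem_univ, true_and, Multiset.mem_toFinset,
      Polynomial.mem_roots hm0, IsRoot.def, hmdef, Polynomial.eval_map, Polynomial.aeval_def]
    show _ ↔ x ∈ m.roots
    rw [Polynomial.mem_roots hm0, IsRoot.def, hmdef, Polynomial.eval_map]
    exact ⟨fun h => (Finset.mem_filter.mp h).2, fun h => Finset.mem_filter.mpr ⟨Finset.mem_univ _, h⟩⟩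
  rw [Nat.card_eq_fintype_card, Fintype.card_subtype, hset,
    Multiset.toFinset_card_eq_card_iff_nodup.mpr hnodup, hmcard]

lemma adjoin_eq_top_iff {k : ℕ} (hrank : Module.finrank Fq Fqk = k) (t₀ : Fqk) :
    Algebra.adjoin Fq {t₀} = ⊤ ↔ (minpoly Fq t₀).natDegree = k := by
  have hint : IsIntegral Fq t₀ := IsIntegral.of_finite Fq t₀
  have h1 : Module.finrank Fq (Algebra.adjoin Fq ({t₀} : Set Fqk)) =
      (minpoly Fq t₀).natDegree := by
    rw [(Algebra.adjoin.powerBasis hint).finrank, Algebra.adjoin.powerBasis_dim]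
  constructor
  · intro h
    rw [h, ← Subalgebra.finrank_toSubmodule, Algebra.top_toSubmodule, finrank_top, hrank] at h1
    exact h1.symm
  · intro h
    have h2 : Subalgebra.toSubmodule (Algebra.adjoin Fq ({t₀} : Set Fqk)) = ⊤ :=
      Submodule.eq_top_of_finrank_eq (by rw [Subalgebra.finrank_toSubmodule, h1, h, hrank])
    exact Algebra.toSubmodule_eq_top.mp h2

end Aux

/-- `k` times the number of pairs `(ℓ, r)` with `ℓ` monic irreducible of
degree `k`, `deg r < k` and `f(r) ≡ 0 (mod ℓ)`, equals the number of points
`(t₀, x₀) ∈ F_{q^k}²` with `f(t₀, x₀) = 0` and `t₀` generating `F_{q^k}` over `F_q`. -/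
theorem count_root_pairs_eq_points
    (Fq : Type*) [Field Fq] [Fintype Fq]
    (f : Polynomial (Polynomial Fq)) (k : ℕ) (hk : 1 ≤ k)
    (Fqk : Type*) [Field Fqk] [Fintype Fqk] [Algebra Fq Fqk]
    (hrank : Module.finrank Fq Fqk = k) :
    k * Nat.card {lr : Polynomial Fq × Polynomial Fq |
        lr.1.Monic ∧ Irreducible lr.1 ∧ lr.1.natDegree = k ∧
        lr.2.degree < (k : WithBot ℕ) ∧ lr.1 ∣ f.eval lr.2} =
      Nat.card {tx : Fqk × Fqk |
        evalTX f tx.1 tx.2 = 0 ∧ Algebra.adjoin Fq {tx.1} = ⊤} := by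
  classical
  set L : Set (Polynomial Fq × Polynomial Fq) := {lr : Polynomial Fq × Polynomial Fq |
      lr.1.Monic ∧ Irreducible lr.1 ∧ lr.1.natDegree = k ∧
      lr.2.degree < (k : WithBot ℕ) ∧ lr.1 ∣ f.eval lr.2} with hL
  set R : Set (Fqk × Fqk) := {tx : Fqk × Fqk |
      evalTX f tx.1 tx.2 = 0 ∧ Algebra.adjoin Fq {tx.1} = ⊤} with hR
  -- finiteness of L
  have hfin : ∀ n : ℕ, {p : Polynomial Fq | p.degree < (n : WithBot ℕ)}.Finite := by
    intro n
    haveI : Finite (Polynomial.degreeLT Fq n) :=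
      Finite.of_equiv _ (Polynomial.degreeLTEquiv Fq n).symm.toEquiv
    have heq : {p : Polynomial Fq | p.degree < (n : WithBot ℕ)} =
        ((Polynomial.degreeLT Fq n : Submodule Fq (Polynomial Fq)) : Set (Polynomial Fq)) := by
      ext p; simp [Polynomial.mem_degreeLT]
    rw [heq]
    exact Set.toFinite _
  have hLfin : L.Finite := by
    apply Set.Finite.subset (Set.Finite.prod (hfin (k+1)) (hfin k))
    rintro ⟨ℓ, r⟩ ⟨h1, h2, h3, h4, h5⟩
    refine ⟨?_, h4⟩
    show ℓ.degree < ((k+1 : ℕ) : WithBot ℕ)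
    rw [degree_eq_natDegree h1.ne_zero, h3]
    exact_mod_cast Nat.lt_succ_self k
  haveI : Finite ↥L := hLfin.to_subtype
  haveI : Fintype ↥L := Fintype.ofFinite _
  -- the bijection
  let Ψ : (Σ lr : ↥L, {t₀ : Fqk // (aeval t₀) lr.1.1 = 0}) → ↥R := fun p =>
    ⟨(p.2.1, (aeval (p.2.1 : Fqk)) p.1.1.2), by
      obtain ⟨⟨⟨ℓ, r⟩, hm, hi, hd, hr, hdvd⟩, ⟨t₀, ht⟩⟩ := p
      dsimp only at hm hi hd hr hdvd ht ⊢
      refine ⟨?_, ?_⟩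
      · show evalTX f t₀ ((aeval t₀) r) = 0
        rw [evalTX_aeval]
        obtain ⟨c, hc⟩ := hdvd
        rw [hc, map_mul, ht, zero_mul]
      · refine (adjoin_eq_top_iff hrank t₀).mpr ?_
        rw [← minpoly.eq_of_irreducible_of_monic hi ht hm]
        exact hd⟩
  have hinj : Function.Injective Ψ := by
    rintro ⟨⟨⟨ℓ, r⟩, hm, hi, hd, hr, hdvd⟩, ⟨t₀, ht⟩⟩
      ⟨⟨⟨ℓ', r'⟩, hm', hi', hd', hr', hdvd'⟩, ⟨t₀', ht'⟩⟩ heq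
    dsimp only at hm hi hd hr hdvd ht hm' hi' hd' hr' hdvd' ht'
    have hval : ((t₀, (aeval t₀) r) : Fqk × Fqk) = (t₀', (aeval t₀') r') :=
      congrArg Subtype.val heq
    have h1 : t₀ = t₀' := congrArg Prod.fst hval
    subst h1
    have h2 : (aeval t₀) r = (aeval t₀) r' := congrArg Prod.snd hval
    have hℓ : ℓ = ℓ' :=
      (minpoly.eq_of_irreducible_of_monic hi ht hm).trans
        (minpoly.eq_of_irreducible_of_monic hi' ht' hm').symm
    subst hℓ
    have hrr : r = r' := by
      by_contra hne
      have hsub0 : r - r' ≠ 0 := sub_ne_zero.mpr hne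
      have haev : (aeval t₀) (r - r') = 0 := by rw [map_sub, h2, sub_self]
      have hle := minpoly.degree_le_of_ne_zero Fq t₀ hsub0 haev
      rw [← minpoly.eq_of_irreducible_of_monic hi ht hm] at hle
      have hdeg : (r - r').degree < ℓ.degree := by
        rw [degree_eq_natDegree hm.ne_zero, hd]
        exact lt_of_le_of_lt (degree_sub_le r r') (max_lt hr hr')
      exact absurd hle (not_le.mpr hdeg)
    subst hrr
    rfl
  have hsurj : Function.Surjective Ψ := by
    rintro ⟨⟨t₀, x₀⟩, hev, hadj⟩
    have hint : IsIntegral Fq t₀ := IsIntegral.of_finite Fq t₀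
    have hm : (minpoly Fq t₀).Monic := minpoly.monic hint
    have hi : Irreducible (minpoly Fq t₀) := minpoly.irreducible hint
    have hd : (minpoly Fq t₀).natDegree = k := (adjoin_eq_top_iff hrank t₀).mp hadj
    have hx : x₀ ∈ Algebra.adjoin Fq ({t₀} : Set Fqk) := by
      rw [hadj]; exact Algebra.mem_top
    rw [Algebra.adjoin_singleton_eq_range_aeval] at hx
    obtain ⟨p, hp⟩ := (aeval t₀).mem_range.mp hx
    have haer : (aeval t₀) (p %ₘ minpoly Fq t₀) = x₀ := by
      conv_rhs => rw [← hp, ← modByMonic_add_div p (minpoly Fq t₀)]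
      rw [map_add, map_mul, minpoly.aeval, zero_mul, add_zero]
    have hdeg : (p %ₘ minpoly Fq t₀).degree < (k : WithBot ℕ) := by
      have h := degree_modByMonic_lt p hm
      rwa [degree_eq_natDegree hm.ne_zero, hd] at h
    have hdvd : minpoly Fq t₀ ∣ f.eval (p %ₘ minpoly Fq t₀) := by
      apply minpoly.dvd
      rw [← evalTX_aeval, haer]
      exact hev
    refine ⟨⟨⟨(minpoly Fq t₀, p %ₘ minpoly Fq t₀), hm, hi, hd, hdeg, hdvd⟩,
      ⟨t₀, minpoly.aeval Fq t₀⟩⟩, ?_⟩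
    apply Subtype.ext
    show ((t₀, (aeval t₀) (p %ₘ minpoly Fq t₀)) : Fqk × Fqk) = (t₀, x₀)
    rw [haer]
  -- counting
  rw [← Nat.card_eq_of_bijective Ψ ⟨hinj, hsurj⟩]
  have hsig : Nat.card (Σ lr : ↥L, {t₀ : Fqk // (aeval t₀) lr.1.1 = 0}) =
      ∑ lr : ↥L, Fintype.card {t₀ : Fqk // (aeval t₀) lr.1.1 = 0} := by
    rw [Nat.card_eq_fintype_card, Fintype.card_sigma]
  rw [hsig]
  have hfiber : ∀ lr : ↥L, Fintype.card {t₀ : Fqk // (aeval t₀) lr.1.1 = 0} = k := by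
    rintro ⟨⟨ℓ, r⟩, hm, hi, hd, -, -⟩
    dsimp only at hm hi hd ⊢
    rw [← Nat.card_eq_fintype_card]
    exact card_roots_aeval hk hrank hm hi hd
  rw [Finset.sum_congr rfl (fun lr _ => hfiber lr), Finset.sum_const, Finset.card_univ,
    smul_eq_mul, Nat.card_eq_fintype_card, mul_comm]
end

section
/- Let q be a prime power and f = Σ_{i=0}^a f_i x^i ∈ F_q[t][x] a C_{a,b} polynomial: a = deg_x f ≥ 2, f_a ≠ 0, f_0 ≠ 0, b := deg f_0 − deg f_a > 0, gcd(a,b) = 1, and for every i with 1 ≤ i ≤ a−1 and f_i ≠ 0, a·deg f_i < a·deg f_a + (a−i)·b. Then for every nonzero Laurent series r ∈ F_q((1/t)), deg f(r) = max_{0 ≤ i ≤ a} deg(f_i r^i) (with the convention deg 0 = −∞); in particular f has no root in F_q((1/t)) \ {0}, and f has no Laurent roots. -/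
open Polynomial

/-- The embedding `F_q[t] → F_q((1/t))`, sending `t` to the inverse of the variable of the
Laurent series field (so the variable of `LaurentSeries Fq` plays the role of `1/t`). -/
noncomputable def polyToInvLaurent (Fq : Type*) [Field Fq] :
    Polynomial Fq →+* LaurentSeries Fq :=
  Polynomial.eval₂RingHom (HahnSeries.C) (HahnSeries.single (-1 : ℤ) (1 : Fq))

open scoped Classical in
/-- The degree of an element of `F_q((1/t))`: minus its `1/t`-adic valuation,
with `deg 0 = ⊥`. -/
noncomputable def laurentDeg {Fq : Type*} [Field Fq] (x : LaurentSeries Fq) : WithBot ℤ :=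
  if x = 0 then ⊥ else ((-x.order : ℤ) : WithBot ℤ)

section Aux
variable {Fq : Type*} [Field Fq]

lemma laurentDeg_zero : laurentDeg (0 : LaurentSeries Fq) = ⊥ := if_pos rfl

lemma laurentDeg_of_ne {x : LaurentSeries Fq} (hx : x ≠ 0) :
    laurentDeg x = ((-x.order : ℤ) : WithBot ℤ) := if_neg hx

lemma laurentDeg_mul {x y : LaurentSeries Fq} (hx : x ≠ 0) (hy : y ≠ 0) :
    laurentDeg (x * y) = laurentDeg x + laurentDeg y := by
  rw [laurentDeg_of_ne hx, laurentDeg_of_ne hy, laurentDeg_of_ne (mul_ne_zero hx hy),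
    HahnSeries.order_mul hx hy, neg_add, WithBot.coe_add]

lemma laurentDeg_pow {x : LaurentSeries Fq} (hx : x ≠ 0) (n : ℕ) :
    laurentDeg (x ^ n) = (((n : ℤ) * (-x.order) : ℤ) : WithBot ℤ) := by
  rw [laurentDeg_of_ne (pow_ne_zero n hx), HahnSeries.order_pow]
  congr 1
  simp [mul_comm]

lemma laurentDeg_single {g : ℤ} {c : Fq} (hc : c ≠ 0) :
    laurentDeg (HahnSeries.single g c : LaurentSeries Fq) = ((-g : ℤ) : WithBot ℤ) := by
  rw [laurentDeg_of_ne (HahnSeries.single_ne_zero hc), HahnSeries.order_single hc]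

lemma laurentDeg_add_of_lt {x y : LaurentSeries Fq} (h : laurentDeg y < laurentDeg x) :
    laurentDeg (x + y) = laurentDeg x := by
  have hx : x ≠ 0 := by
    rintro rfl
    rw [laurentDeg_zero] at h
    exact not_lt_bot h
  by_cases hy : y = 0
  · simp [hy]
  rw [laurentDeg_of_ne hx, laurentDeg_of_ne hy, WithBot.coe_lt_coe] at h
  have hord : x.order < y.order := by omega
  have hcoeff : (x + y).coeff x.order ≠ 0 := by
    rw [HahnSeries.coeff_add, HahnSeries.coeff_eq_zero_of_lt_order hord, add_zero]
    exact fun h0 => hx (HahnSeries.coeff_order_eq_zero.mp h0)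
  have hxy : x + y ≠ 0 := fun h0 => hcoeff (by simp [h0])
  have h1 : (x + y).order ≤ x.order := HahnSeries.order_le_of_coeff_ne_zero hcoeff
  have h2 : min x.order y.order ≤ (x + y).order := HahnSeries.min_order_le_order_add hxy
  rw [laurentDeg_of_ne hxy, laurentDeg_of_ne hx]
  congr 1
  omega

lemma laurentDeg_add_le (x y : LaurentSeries Fq) :
    laurentDeg (x + y) ≤ max (laurentDeg x) (laurentDeg y) := by
  by_cases hxy : x + y = 0
  · simp [hxy, laurentDeg_zero]
  by_cases hx : x = 0
  · simp [hx]
  by_cases hy : y = 0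
  · simp [hy]
  have h2 : min x.order y.order ≤ (x + y).order := HahnSeries.min_order_le_order_add hxy
  rw [laurentDeg_of_ne hxy, laurentDeg_of_ne hx, laurentDeg_of_ne hy]
  rcases min_cases x.order y.order with ⟨hm, _⟩ | ⟨hm, _⟩ <;> rw [hm] at h2
  · exact le_max_of_le_left (by exact_mod_cast by omega)
  · exact le_max_of_le_right (by exact_mod_cast by omega)

lemma laurentDeg_sum_lt {ι : Type*} {s : Finset ι} {F : ι → LaurentSeries Fq} {c : WithBot ℤ}
    (hc : ⊥ < c) (h : ∀ i ∈ s, laurentDeg (F i) < c) :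
    laurentDeg (∑ i ∈ s, F i) < c := by
  classical
  induction s using Finset.induction with
  | empty => simpa [laurentDeg_zero]
  | @insert j s hj ih =>
    rw [Finset.sum_insert hj]
    exact lt_of_le_of_lt (laurentDeg_add_le _ _)
      (max_lt (h _ (Finset.mem_insert_self _ _))
        (ih fun i hi => h i (Finset.mem_insert_of_mem hi)))

lemma laurentDeg_sum_eq {ι : Type*} {s : Finset ι} {F : ι → LaurentSeries Fq} {i₀ : ι}
    (hi₀ : i₀ ∈ s) (h0 : F i₀ ≠ 0)
    (h : ∀ i ∈ s, i ≠ i₀ → laurentDeg (F i) < laurentDeg (F i₀)) :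
    laurentDeg (∑ i ∈ s, F i) = laurentDeg (F i₀) := by
  classical
  rw [← Finset.add_sum_erase _ _ hi₀]
  refine laurentDeg_add_of_lt (laurentDeg_sum_lt ?_ ?_)
  · rw [laurentDeg_of_ne h0]; exact bot_lt_iff_ne_bot.mpr (WithBot.coe_ne_bot)
  · exact fun i hi => h i (Finset.mem_of_mem_erase hi) (Finset.ne_of_mem_erase hi)

lemma polyToInvLaurent_eq (p : Polynomial Fq) :
    polyToInvLaurent Fq p =
      ∑ j ∈ Finset.range (p.natDegree + 1), HahnSeries.single (-(j : ℤ)) (p.coeff j) := by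
  have : polyToInvLaurent Fq p
      = p.eval₂ (HahnSeries.C) (HahnSeries.single (-1 : ℤ) (1 : Fq)) := rfl
  rw [this, Polynomial.eval₂_eq_sum_range]
  refine Finset.sum_congr rfl fun j _ => ?_
  rw [HahnSeries.single_pow, HahnSeries.C_apply, HahnSeries.single_mul_single,
    one_pow, zero_add, mul_one]
  congr 1
  simp

lemma laurentDeg_polyToInvLaurent {p : Polynomial Fq} (hp : p ≠ 0) :
    laurentDeg (polyToInvLaurent Fq p) = ((p.natDegree : ℤ) : WithBot ℤ) := by
  rw [polyToInvLaurent_eq]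
  have hmem : p.natDegree ∈ Finset.range (p.natDegree + 1) := Finset.self_mem_range_succ _
  have hlead : p.coeff p.natDegree ≠ 0 := Polynomial.leadingCoeff_ne_zero.mpr hp
  rw [laurentDeg_sum_eq (F := fun (j : ℕ) => (HahnSeries.single (-(j : ℤ)) (p.coeff j) : LaurentSeries Fq))
      hmem (HahnSeries.single_ne_zero hlead) ?_, laurentDeg_single hlead, neg_neg]
  intro i hi hne
  rw [laurentDeg_single hlead, neg_neg]
  have hi' : i < p.natDegree := lt_of_le_of_ne (Nat.lt_succ_iff.mp (Finset.mem_range.mp hi)) hne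
  by_cases hc : p.coeff i = 0
  · simp [hc, laurentDeg_zero, bot_lt_iff_ne_bot]
  · rw [laurentDeg_single hc, neg_neg]
    exact_mod_cast hi'

lemma polyToInvLaurent_ne_zero {p : Polynomial Fq} (hp : p ≠ 0) :
    polyToInvLaurent Fq p ≠ 0 := by
  intro h
  have := laurentDeg_polyToInvLaurent (Fq := Fq) hp
  rw [h, laurentDeg_zero] at this
  exact WithBot.bot_ne_coe this

end Aux

/-- For a `C_{a,b}` polynomial `f = Σ_{i=0}^a f_i x^i ∈ F_q[t][x]`
(`a = deg_x f ≥ 2`, `f_a, f_0 ≠ 0`, `b = deg f_0 - deg f_a > 0`, `gcd(a,b) = 1`, and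
`a · deg f_i < a · deg f_a + (a-i) · b` for `1 ≤ i ≤ a-1` with `f_i ≠ 0`), for every
nonzero `r ∈ F_q((1/t))` we have `deg f(r) = max_i deg (f_i r^i)`; in particular `f` has
no nonzero root in `F_q((1/t))` (hence no Laurent roots). -/
theorem cab_no_laurent_roots
    (Fq : Type*) [Field Fq]
    (f : Polynomial (Polynomial Fq)) (a : ℕ) (ha : f.natDegree = a) (ha2 : 2 ≤ a)
    (hfa : f.coeff a ≠ 0) (hf0 : f.coeff 0 ≠ 0)
    (b : ℤ) (hb : b = ((f.coeff 0).natDegree : ℤ) - ((f.coeff a).natDegree : ℤ))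
    (hbpos : 0 < b) (hgcd : Int.gcd (a : ℤ) b = 1)
    (hCab : ∀ i : ℕ, 1 ≤ i → i ≤ a - 1 → f.coeff i ≠ 0 →
      (a : ℤ) * ((f.coeff i).natDegree : ℤ) <
        (a : ℤ) * ((f.coeff a).natDegree : ℤ) + ((a : ℤ) - (i : ℤ)) * b) :
    (∀ r : LaurentSeries Fq, r ≠ 0 →
      laurentDeg (f.eval₂ (polyToInvLaurent Fq) r) =
        (Finset.range (a + 1)).sup
          (fun i => laurentDeg ((polyToInvLaurent Fq) (f.coeff i) * r ^ i))) ∧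
    (∀ r : LaurentSeries Fq, r ≠ 0 → f.eval₂ (polyToInvLaurent Fq) r ≠ 0) := by
  set φ := polyToInvLaurent Fq with hφ
  set D : ℕ → ℤ := fun i => ((f.coeff i).natDegree : ℤ) with hD
  -- a*d = b is impossible
  have hAd : ∀ d : ℤ, (a : ℤ) * d ≠ b := by
    intro d h
    have hdvd : (a : ℤ) ∣ b := ⟨d, h.symm⟩
    have h2 : (a : ℤ).natAbs ∣ Int.gcd (a : ℤ) b :=
      Nat.dvd_gcd dvd_rfl (Int.natAbs_dvd_natAbs.mpr hdvd)
    rw [hgcd, Int.natAbs_natCast] at h2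
    have := Nat.le_of_dvd one_pos h2
    omega
  have hA : (0 : ℤ) < (a : ℤ) := by exact_mod_cast lt_of_lt_of_le two_pos ha2
  have hD0 : D 0 = D a + b := by rw [hb]; ring
  -- the arithmetic core
  have harith : ∀ d : ℤ, ∃ i₀, (i₀ = 0 ∨ i₀ = a) ∧
      ∀ i ≤ a, i ≠ i₀ → f.coeff i ≠ 0 → D i + i * d < D i₀ + i₀ * d := by
    intro d
    by_cases hcase : b < (a : ℤ) * d
    · refine ⟨a, Or.inr rfl, fun i hia hne hci => ?_⟩
      have hia' : i < a := lt_of_le_of_ne hia hne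
      have haiZ : (0 : ℤ) < (a : ℤ) - (i : ℤ) := by
        have : (i : ℤ) < (a : ℤ) := by exact_mod_cast hia'
        omega
      rcases Nat.eq_zero_or_pos i with hi0 | hi1
      · subst hi0
        rw [hD0]
        push_cast
        linarith
      · have h1 := hCab i hi1 (by omega) hci
        have h2 : ((a : ℤ) - (i : ℤ)) * b < ((a : ℤ) - (i : ℤ)) * ((a : ℤ) * d) :=
          mul_lt_mul_of_pos_left hcase haiZ
        have h3 : (a : ℤ) * (D i + (i : ℤ) * d) < (a : ℤ) * (D a + (a : ℤ) * d) := by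
          nlinarith
        exact lt_of_mul_lt_mul_left h3 (le_of_lt hA)
    · have had : (a : ℤ) * d < b := lt_of_le_of_ne (not_lt.mp hcase) (hAd d)
      refine ⟨0, Or.inl rfl, fun i hia hne hci => ?_⟩
      have hi1 : 1 ≤ i := Nat.one_le_iff_ne_zero.mpr hne
      rw [hD0]
      rcases eq_or_ne i a with hieq | hine
      · subst hieq
        push_cast
        linarith
      · have hia' : i < a := lt_of_le_of_ne hia hine
        have hiZ : (0 : ℤ) < (i : ℤ) := by exact_mod_cast hi1
        have h1 := hCab i hi1 (by omega) hci
        have h3 : (i : ℤ) * ((a : ℤ) * d) < (i : ℤ) * b := mul_lt_mul_of_pos_left had hiZ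
        have h4 : (a : ℤ) * (D i + (i : ℤ) * d) < (a : ℤ) * (D a + b + 0 * d) := by
          nlinarith
        exact lt_of_mul_lt_mul_left (by push_cast; push_cast at h4; linarith) (le_of_lt hA)
  -- the key statement
  have key : ∀ r : LaurentSeries Fq, r ≠ 0 →
      ∃ i₀ ∈ Finset.range (a + 1), f.coeff i₀ ≠ 0 ∧
        laurentDeg (f.eval₂ φ r) = laurentDeg (φ (f.coeff i₀) * r ^ i₀) ∧
        ∀ i ∈ Finset.range (a + 1), i ≠ i₀ →
          laurentDeg (φ (f.coeff i) * r ^ i) < laurentDeg (φ (f.coeff i₀) * r ^ i₀) := by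
    intro r hr
    set d : ℤ := -r.order with hd
    have hterm : ∀ i : ℕ, f.coeff i ≠ 0 →
        laurentDeg (φ (f.coeff i) * r ^ i) = ((D i + (i : ℤ) * d : ℤ) : WithBot ℤ) := by
      intro i hci
      rw [laurentDeg_mul (polyToInvLaurent_ne_zero hci) (pow_ne_zero _ hr),
        laurentDeg_polyToInvLaurent hci, laurentDeg_pow hr, ← WithBot.coe_add]
    obtain ⟨i₀, hi₀cases, hmax⟩ := harith d
    have hi₀a : i₀ ≤ a := by rcases hi₀cases with h | h <;> omega
    have hci₀ : f.coeff i₀ ≠ 0 := by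
      rcases hi₀cases with h | h <;> rw [h] <;> assumption
    have hlt : ∀ i ∈ Finset.range (a + 1), i ≠ i₀ →
        laurentDeg (φ (f.coeff i) * r ^ i) < laurentDeg (φ (f.coeff i₀) * r ^ i₀) := by
      intro i hi hne
      rw [hterm i₀ hci₀]
      by_cases hci : f.coeff i = 0
      · rw [hci, map_zero, zero_mul, laurentDeg_zero]
        exact bot_lt_iff_ne_bot.mpr WithBot.coe_ne_bot
      · rw [hterm i hci, WithBot.coe_lt_coe]
        exact hmax i (Nat.lt_succ_iff.mp (Finset.mem_range.mp hi)) hne hci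
    refine ⟨i₀, Finset.mem_range.mpr (Nat.lt_succ_of_le hi₀a), hci₀, ?_, hlt⟩
    have heval : f.eval₂ φ r = ∑ i ∈ Finset.range (a + 1), φ (f.coeff i) * r ^ i := by
      rw [← ha]; exact Polynomial.eval₂_eq_sum_range φ r
    rw [heval]
    exact laurentDeg_sum_eq (Finset.mem_range.mpr (Nat.lt_succ_of_le hi₀a))
      (mul_ne_zero (polyToInvLaurent_ne_zero hci₀) (pow_ne_zero _ hr)) hlt
  constructor
  · intro r hr
    obtain ⟨i₀, hi₀, hci₀, heq, hlt⟩ := key r hr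
    rw [heq]
    symm
    refine le_antisymm (Finset.sup_le fun i hi => ?_) (Finset.le_sup (f := fun i => laurentDeg (φ (f.coeff i) * r ^ i)) hi₀)
    by_cases h : i = i₀
    · subst h; exact le_rfl
    · exact (hlt i hi h).le
  · intro r hr h0
    obtain ⟨i₀, hi₀, hci₀, heq, hlt⟩ := key r hr
    rw [h0, laurentDeg_zero,
      laurentDeg_of_ne (mul_ne_zero (polyToInvLaurent_ne_zero hci₀) (pow_ne_zero _ hr))] at heq
    exact WithBot.bot_ne_coe heq
end
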